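/- arXiv:1510.02875 — 6 statements merged into one kernel-verified Lean document; each statement's English description precedes it below -/
import Mathlib

section
/- For every even positive integer n, there is no legal game sequence of length n² on the n×n chessboard; that is, the squares of the n×n board cannot all be filled by legal play. -/
/-- Two distinct squares `(a,b)` and `(c,d)` attack each other if `a = c`, `b = d`,
`a + b = c + d`, or `a - b = c - d` (the last encoded as `a + d = c + b`). -/
def attacks (p q : ℕ × ℕ) : Prop :=
  p ≠ q ∧ (p.1 = q.1 ∨ p.2 = q.2 ∨ p.1 + p.2 = q.1 + q.2 ∨ p.1 + q.2 = q.1 + p.2)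

instance : ∀ p q : ℕ × ℕ, Decidable (attacks p q) := fun p q => by
  unfold attacks; infer_instance

/-- The squares of the `n × n` chessboard: pairs `(i,j)` with `1 ≤ i, j ≤ n`. -/
def board (n : ℕ) : Finset (ℕ × ℕ) := Finset.Icc 1 n ×ˢ Finset.Icc 1 n

/-- A legal game sequence: pairwise distinct squares of the board such that each newly
placed queen lands on a square attacked by an even number of previously placed queens. -/
def IsLegalSeq (n : ℕ) {k : ℕ} (q : Fin k → ℕ × ℕ) : Prop :=
  Function.Injective q ∧ (∀ i, q i ∈ board n) ∧
    ∀ i : Fin k, Even ((Finset.univ.filter fun j : Fin k => j < i ∧ attacks (q j) (q i)).card)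

/-- A set `S` of squares is locked if every square of the board not in `S` is attacked by
an odd number of squares of `S`. -/
def Locked (n : ℕ) (S : Finset (ℕ × ℕ)) : Prop :=
  ∀ p ∈ board n, p ∉ S → Odd ((S.filter fun s => attacks s p).card)

open Finset

lemma row_card (n a b : ℕ) (ha1 : 1 ≤ a) (ha2 : a ≤ n) (hb1 : 1 ≤ b) (hb2 : b ≤ n) :
    ((board n).filter (fun s => s.1 = a ∧ s.2 ≠ b)).card = n - 1 := by
  have : (board n).filter (fun s => s.1 = a ∧ s.2 ≠ b)
      = ((Icc 1 n).erase b).image (fun d => (a, d)) := by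
    ext ⟨c, d⟩
    simp only [mem_filter, board, mem_product, mem_Icc, mem_image, mem_erase,
      Prod.mk.injEq, ne_eq]
    constructor
    · rintro ⟨⟨hc, hd⟩, rfl, hne⟩; exact ⟨d, ⟨hne, hd⟩, rfl, rfl⟩
    · rintro ⟨x, ⟨hx, hx2⟩, rfl, rfl⟩; omega
  rw [this, card_image_of_injective _ (fun x y h => by simpa using congrArg Prod.snd h),
    card_erase_of_mem (by simp [mem_Icc]; omega), Nat.card_Icc]
  omega

lemma col_card (n a b : ℕ) (ha1 : 1 ≤ a) (ha2 : a ≤ n) (hb1 : 1 ≤ b) (hb2 : b ≤ n) :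
    ((board n).filter (fun s => s.2 = b ∧ s.1 ≠ a)).card = n - 1 := by
  have : (board n).filter (fun s => s.2 = b ∧ s.1 ≠ a)
      = ((Icc 1 n).erase a).image (fun c => (c, b)) := by
    ext ⟨c, d⟩
    simp only [mem_filter, board, mem_product, mem_Icc, mem_image, mem_erase,
      Prod.mk.injEq, ne_eq]
    constructor
    · rintro ⟨⟨hc, hd⟩, rfl, hne⟩; exact ⟨c, ⟨hne, hc⟩, rfl, rfl⟩
    · rintro ⟨x, ⟨hx, hx2⟩, rfl, rfl⟩; omega
  rw [this, card_image_of_injective _ (fun x y h => by simpa using congrArg Prod.fst h),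
    card_erase_of_mem (by simp [mem_Icc]; omega), Nat.card_Icc]
  omega

lemma diag_card (n a b : ℕ) (ha1 : 1 ≤ a) (ha2 : a ≤ n) (hb1 : 1 ≤ b) (hb2 : b ≤ n) :
    ((board n).filter (fun s => s.1 + b = a + s.2 ∧ s.1 ≠ a)).card
      + ((a : ℤ) - b).natAbs + 1 = n := by
  have : (board n).filter (fun s => s.1 + b = a + s.2 ∧ s.1 ≠ a)
      = ((Icc (max 1 (a + 1 - b)) (min n (a + n - b))).erase a).image
          (fun c => (c, c + b - a)) := by
    ext ⟨c, d⟩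
    simp only [mem_filter, board, mem_product, mem_Icc, mem_image, mem_erase,
      Prod.mk.injEq, ne_eq, le_min_iff, max_le_iff]
    constructor
    · rintro ⟨⟨hc, hd⟩, heq, hne⟩
      exact ⟨c, ⟨hne, by omega, by omega⟩, rfl, by omega⟩
    · rintro ⟨x, ⟨hx, hx1, hx2⟩, rfl, rfl⟩; omega
  rw [this, card_image_of_injective _ (fun x y h => by simpa using congrArg Prod.fst h),
    card_erase_of_mem (by simp [mem_Icc]; omega), Nat.card_Icc]
  omega

lemma adiag_card (n a b : ℕ) (ha1 : 1 ≤ a) (ha2 : a ≤ n) (hb1 : 1 ≤ b) (hb2 : b ≤ n) :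
    ((board n).filter (fun s => s.1 + s.2 = a + b ∧ s.1 ≠ a)).card
      + ((a : ℤ) + b - (n + 1)).natAbs + 1 = n := by
  have : (board n).filter (fun s => s.1 + s.2 = a + b ∧ s.1 ≠ a)
      = ((Icc (max 1 (a + b - n)) (min n (a + b - 1))).erase a).image
          (fun c => (c, a + b - c)) := by
    ext ⟨c, d⟩
    simp only [mem_filter, board, mem_product, mem_Icc, mem_image, mem_erase,
      Prod.mk.injEq, ne_eq, le_min_iff, max_le_iff]
    constructor
    · rintro ⟨⟨hc, hd⟩, heq, hne⟩
      exact ⟨c, ⟨hne, by omega, by omega⟩, rfl, by omega⟩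
    · rintro ⟨x, ⟨hx, hx1, hx2⟩, rfl, rfl⟩; omega
  rw [this, card_image_of_injective _ (fun x y h => by simpa using congrArg Prod.fst h),
    card_erase_of_mem (by simp [mem_Icc]; omega), Nat.card_Icc]
  omega

lemma attackers_card (n : ℕ) (heven : Even n) (p : ℕ × ℕ) (hp : p ∈ board n) :
    Odd (((board n).filter fun s => attacks s p).card) := by
  obtain ⟨a, b⟩ := p
  simp only [board, mem_product, mem_Icc] at hp
  obtain ⟨⟨ha1, ha2⟩, hb1, hb2⟩ := hp
  have hunion : ((board n).filter fun s => attacks s (a, b)) =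
      (board n).filter (fun s => s.1 = a ∧ s.2 ≠ b) ∪
      (board n).filter (fun s => s.2 = b ∧ s.1 ≠ a) ∪
      ((board n).filter (fun s => s.1 + b = a + s.2 ∧ s.1 ≠ a) ∪
      (board n).filter (fun s => s.1 + s.2 = a + b ∧ s.1 ≠ a)) := by
    ext ⟨c, d⟩
    simp only [mem_union, mem_filter]
    simp only [mem_union, mem_filter, board, mem_product, mem_Icc,
      attacks, ne_eq, Prod.mk.injEq, not_and]
    omega
  have d12 : Disjoint ((board n).filter (fun s => s.1 = a ∧ s.2 ≠ b))
      ((board n).filter (fun s => s.2 = b ∧ s.1 ≠ a)) := by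
    rw [disjoint_left]; intro ⟨c, d⟩ h1 h2
    simp only [mem_filter] at h1 h2; omega
  have d34 : Disjoint ((board n).filter (fun s => s.1 + b = a + s.2 ∧ s.1 ≠ a))
      ((board n).filter (fun s => s.1 + s.2 = a + b ∧ s.1 ≠ a)) := by
    rw [disjoint_left]; intro ⟨c, d⟩ h1 h2
    simp only [mem_filter] at h1 h2; omega
  have d1234 : Disjoint ((board n).filter (fun s => s.1 = a ∧ s.2 ≠ b) ∪
      (board n).filter (fun s => s.2 = b ∧ s.1 ≠ a))
      ((board n).filter (fun s => s.1 + b = a + s.2 ∧ s.1 ≠ a) ∪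
      (board n).filter (fun s => s.1 + s.2 = a + b ∧ s.1 ≠ a)) := by
    rw [disjoint_left]; intro ⟨c, d⟩ h1 h2
    simp only [mem_union, mem_filter] at h1 h2; omega
  rw [hunion, card_union_of_disjoint d1234, card_union_of_disjoint d12,
    card_union_of_disjoint d34, row_card n a b ha1 ha2 hb1 hb2,
    col_card n a b ha1 ha2 hb1 hb2]
  have h3 := diag_card n a b ha1 ha2 hb1 hb2
  have h4 := adiag_card n a b ha1 ha2 hb1 hb2
  obtain ⟨m, rfl⟩ := heven
  rw [Nat.odd_iff]
  omega

lemma board_card (n : ℕ) : (board n).card = n ^ 2 := by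
  simp [board, Nat.card_Icc, sq]

/-- For every even positive integer `n`, there is no legal game sequence of length
`n ^ 2` on the `n × n` chessboard. -/
theorem even_board_has_no_complete_solution (n : ℕ) (hpos : 0 < n) (heven : Even n) :
    ¬ ∃ q : Fin (n ^ 2) → ℕ × ℕ, IsLegalSeq n q := by
  rintro ⟨q, hinj, hmem, hlegal⟩
  have hn2 : 0 < n ^ 2 := by positivity
  set i : Fin (n ^ 2) := ⟨n ^ 2 - 1, by omega⟩ with hi
  have htop : ∀ j : Fin (n ^ 2), j ≠ i → j < i := by
    intro j hj
    have h2 := j.isLt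
    have h3 : j.val ≠ n ^ 2 - 1 := fun h => hj (Fin.ext h)
    rw [Fin.lt_def]
    simp only [hi]
    omega
  have himg : Finset.image q Finset.univ = board n := by
    apply Finset.eq_of_subset_of_card_le
    · intro p hp
      simp only [mem_image, mem_univ, true_and] at hp
      obtain ⟨j, rfl⟩ := hp
      exact hmem j
    · rw [card_image_of_injective _ hinj, card_univ, Fintype.card_fin, board_card]
  have hset : (Finset.univ.filter fun j => j < i ∧ attacks (q j) (q i))
      = Finset.univ.filter fun j => attacks (q j) (q i) := by
    ext j
    simp only [mem_filter, mem_univ, true_and]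
    constructor
    · exact And.right
    · intro h
      refine ⟨htop j fun e => h.1 ?_, h⟩
      rw [e]
  have key : (Finset.univ.filter fun j => j < i ∧ attacks (q j) (q i)).card
      = ((board n).filter fun s => attacks s (q i)).card := by
    rw [hset, ← himg, Finset.filter_image,
      card_image_of_injective _ hinj]
  have hodd := attackers_card n heven (q i) (hmem i)
  have heven' := hlegal i
  rw [key] at heven'
  exact ((Nat.not_even_iff_odd).2 hodd) heven'
end

section
/- For every odd positive integer n, there exists a legal game sequence on the n×n chessboard whose set of placed squares is exactly S = {(1,i) : 1 ≤ i ≤ n} ∪ {(i,1) : 1 ≤ i ≤ n} (the first row and first column), and this set S is locked. -/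
/-- The first row and first column of the `n × n` chessboard. -/
def firstRowCol (n : ℕ) : Finset (ℕ × ℕ) :=
  ((Finset.Icc 1 n).image fun i => (1, i)) ∪ ((Finset.Icc 1 n).image fun i => (i, 1))

namespace QueensAux

open Finset

/-! ### basic sets -/

def rowSet (a b : ℕ) : Finset (ℕ × ℕ) := (Finset.Icc a b).image fun i => (1, i)
def colSet (a b : ℕ) : Finset (ℕ × ℕ) := (Finset.Icc a b).image fun i => (i, 1)
def stage (t : ℕ) : Finset (ℕ × ℕ) := rowSet 2 (2*t+1) ∪ colSet 2 (2*t+1)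

lemma mem_rowSet {a b : ℕ} {p : ℕ × ℕ} : p ∈ rowSet a b ↔ p.1 = 1 ∧ a ≤ p.2 ∧ p.2 ≤ b := by
  rcases p with ⟨u, v⟩
  simp only [rowSet, Finset.mem_image, Finset.mem_Icc, Prod.mk.injEq]
  constructor
  · rintro ⟨i, ⟨hi1, hi2⟩, h1, h2⟩; omega
  · rintro ⟨h1, h2, h3⟩; exact ⟨v, ⟨h2, h3⟩, h1.symm, rfl⟩

lemma mem_colSet {a b : ℕ} {p : ℕ × ℕ} : p ∈ colSet a b ↔ p.2 = 1 ∧ a ≤ p.1 ∧ p.1 ≤ b := by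
  rcases p with ⟨u, v⟩
  simp only [colSet, Finset.mem_image, Finset.mem_Icc, Prod.mk.injEq]
  constructor
  · rintro ⟨i, ⟨hi1, hi2⟩, h1, h2⟩; omega
  · rintro ⟨h1, h2, h3⟩; exact ⟨u, ⟨h2, h3⟩, rfl, h1.symm⟩

lemma mem_stage {t : ℕ} {p : ℕ × ℕ} :
    p ∈ stage t ↔ (p.1 = 1 ∧ 2 ≤ p.2 ∧ p.2 ≤ 2*t+1) ∨ (p.2 = 1 ∧ 2 ≤ p.1 ∧ p.1 ≤ 2*t+1) := by
  simp [stage, mem_rowSet, mem_colSet]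

lemma mem_firstRowCol {n : ℕ} {p : ℕ × ℕ} :
    p ∈ firstRowCol n ↔ (p.1 = 1 ∧ 1 ≤ p.2 ∧ p.2 ≤ n) ∨ (p.2 = 1 ∧ 1 ≤ p.1 ∧ p.1 ≤ n) := by
  rcases p with ⟨u, v⟩
  simp only [firstRowCol, Finset.mem_union, Finset.mem_image, Finset.mem_Icc, Prod.mk.injEq]
  constructor
  · rintro (⟨i, ⟨hi1, hi2⟩, h1, h2⟩ | ⟨i, ⟨hi1, hi2⟩, h1, h2⟩)
    · left; omega
    · right; omega
  · rintro (⟨h1, h2, h3⟩ | ⟨h1, h2, h3⟩)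
    · exact Or.inl ⟨v, ⟨h2, h3⟩, h1.symm, rfl⟩
    · exact Or.inr ⟨u, ⟨h2, h3⟩, rfl, h1.symm⟩

lemma mem_board {n : ℕ} {p : ℕ × ℕ} :
    p ∈ board n ↔ 1 ≤ p.1 ∧ p.1 ≤ n ∧ 1 ≤ p.2 ∧ p.2 ≤ n := by
  rcases p with ⟨u, v⟩
  simp [board, Finset.mem_product, Finset.mem_Icc, and_assoc]

lemma row_inj : Function.Injective (fun i : ℕ => ((1 : ℕ), i)) := by
  intro i j h; simpa using h

lemma col_inj : Function.Injective (fun i : ℕ => (i, (1 : ℕ))) := by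
  intro i j h; simpa using h

lemma disj_row_col {b c : ℕ} : Disjoint (rowSet 2 b) (colSet 2 c) := by
  rw [Finset.disjoint_left]
  intro p hp hq
  rw [mem_rowSet] at hp; rw [mem_colSet] at hq
  omega

/-! ### filter cardinalities -/

lemma card_row_all {c : ℕ} {x : ℕ × ℕ} (h : ∀ i, 2 ≤ i → i ≤ c → attacks (1, i) x) :
    ((rowSet 2 c).filter fun s => attacks s x).card = c - 1 := by
  rw [rowSet, Finset.filter_image,
    Finset.filter_true_of_mem (fun i hi => h i (Finset.mem_Icc.mp hi).1 (Finset.mem_Icc.mp hi).2),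
    Finset.card_image_of_injective _ row_inj, Nat.card_Icc]
  omega

lemma card_row_none {c : ℕ} {x : ℕ × ℕ} (h : ∀ i, 2 ≤ i → i ≤ c → ¬ attacks (1, i) x) :
    ((rowSet 2 c).filter fun s => attacks s x).card = 0 := by
  rw [rowSet, Finset.filter_image,
    Finset.filter_false_of_mem (fun i hi => h i (Finset.mem_Icc.mp hi).1 (Finset.mem_Icc.mp hi).2)]
  simp

lemma card_col_all {c : ℕ} {x : ℕ × ℕ} (h : ∀ i, 2 ≤ i → i ≤ c → attacks (i, 1) x) :
    ((colSet 2 c).filter fun s => attacks s x).card = c - 1 := by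
  rw [colSet, Finset.filter_image,
    Finset.filter_true_of_mem (fun i hi => h i (Finset.mem_Icc.mp hi).1 (Finset.mem_Icc.mp hi).2),
    Finset.card_image_of_injective _ col_inj, Nat.card_Icc]
  omega

lemma card_col_none {c : ℕ} {x : ℕ × ℕ} (h : ∀ i, 2 ≤ i → i ≤ c → ¬ attacks (i, 1) x) :
    ((colSet 2 c).filter fun s => attacks s x).card = 0 := by
  rw [colSet, Finset.filter_image,
    Finset.filter_false_of_mem (fun i hi => h i (Finset.mem_Icc.mp hi).1 (Finset.mem_Icc.mp hi).2)]
  simp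

lemma card_stage_filter {t : ℕ} {x : ℕ × ℕ} (r c : ℕ)
    (hr : ((rowSet 2 (2*t+1)).filter fun s => attacks s x).card = r)
    (hc : ((colSet 2 (2*t+1)).filter fun s => attacks s x).card = c) :
    ((stage t).filter fun s => attacks s x).card = r + c := by
  rw [stage, Finset.filter_union,
    Finset.card_union_of_disjoint (disj_row_col.mono (Finset.filter_subset _ _) (Finset.filter_subset _ _)),
    hr, hc]

end QueensAux

namespace QueensAux
open Finset

lemma attacks_iff (a b c d : ℕ) :
    attacks (a, b) (c, d) ↔ ¬(a = c ∧ b = d) ∧ (a = c ∨ b = d ∨ a + b = c + d ∨ a + d = c + b) := by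
  unfold attacks; simp [Prod.ext_iff]

lemma image_snoc {α : Type*} [DecidableEq α] {k : ℕ} (q : Fin k → α) (x : α) :
    Finset.univ.image (Fin.snoc q x : Fin (k+1) → α) = insert x (Finset.univ.image q) := by
  ext y
  simp only [Finset.mem_image, Finset.mem_insert, Finset.mem_univ, true_and]
  constructor
  · rintro ⟨i, rfl⟩
    induction i using Fin.lastCases with
    | last => left; rw [Fin.snoc_last]
    | cast i => right; exact ⟨i, by simp⟩
  · rintro (rfl | ⟨i, rfl⟩)
    · exact ⟨Fin.last k, by simp⟩
    · exact ⟨i.castSucc, by simp⟩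

lemma legal_snoc {n k : ℕ} {q : Fin k → ℕ × ℕ} {x : ℕ × ℕ}
    (hq : IsLegalSeq n q) (hx : x ∈ board n) (hnx : x ∉ Finset.univ.image q)
    (hev : Even (((Finset.univ.image q).filter fun s => attacks s x).card)) :
    IsLegalSeq n (Fin.snoc q x : Fin (k+1) → ℕ × ℕ) := by
  obtain ⟨hinj, hb, hcnt⟩ := hq
  have hxr : ∀ i : Fin k, q i ≠ x := fun i h =>
    hnx (Finset.mem_image.mpr ⟨i, Finset.mem_univ i, h⟩)
  refine ⟨?_, ?_, ?_⟩
  · intro i j h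
    induction i using Fin.lastCases with
    | last =>
      induction j using Fin.lastCases with
      | last => rfl
      | cast j =>
        rw [Fin.snoc_last, Fin.snoc_castSucc] at h; exact absurd h.symm (hxr j)
    | cast i =>
      induction j using Fin.lastCases with
      | last => rw [Fin.snoc_last, Fin.snoc_castSucc] at h; exact absurd h (hxr i)
      | cast j =>
        rw [Fin.snoc_castSucc, Fin.snoc_castSucc] at h
        exact congrArg Fin.castSucc (hinj h)
  · intro i
    induction i using Fin.lastCases with
    | last => rw [Fin.snoc_last]; exact hx
    | cast i => rw [Fin.snoc_castSucc]; exact hb i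
  · intro i
    induction i using Fin.lastCases with
    | last =>
      have e1 : (Finset.univ.filter fun j : Fin (k+1) =>
          j < Fin.last k ∧ attacks ((Fin.snoc q x : Fin (k+1) → ℕ × ℕ) j) ((Fin.snoc q x : Fin (k+1) → ℕ × ℕ) (Fin.last k)))
          = (Finset.univ.filter fun j : Fin k => attacks (q j) x).image Fin.castSucc := by
        ext j
        simp only [Finset.mem_filter, Finset.mem_univ, true_and, Finset.mem_image]
        constructor
        · rintro ⟨hlt, hatt⟩
          obtain ⟨j', rfl⟩ := Fin.exists_castSucc_eq.mpr (Fin.ne_of_lt hlt)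
          refine ⟨j', ?_, rfl⟩
          rwa [Fin.snoc_castSucc, Fin.snoc_last] at hatt
        · rintro ⟨j', hatt, rfl⟩
          exact ⟨Fin.castSucc_lt_last j', by rwa [Fin.snoc_castSucc, Fin.snoc_last]⟩
      rw [e1, Finset.card_image_of_injective _ (Fin.castSucc_injective k)]
      have h2 : ((Finset.univ.image q).filter fun s => attacks s x)
          = (Finset.univ.filter fun j : Fin k => attacks (q j) x).image q :=
        Finset.filter_image
      rwa [h2, Finset.card_image_of_injective _ hinj] at hev
    | cast i =>
      have e1 : (Finset.univ.filter fun j : Fin (k+1) =>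
          j < Fin.castSucc i ∧ attacks ((Fin.snoc q x : Fin (k+1) → ℕ × ℕ) j) ((Fin.snoc q x : Fin (k+1) → ℕ × ℕ) (Fin.castSucc i)))
          = (Finset.univ.filter fun j : Fin k => j < i ∧ attacks (q j) (q i)).image Fin.castSucc := by
        ext j
        simp only [Finset.mem_filter, Finset.mem_univ, true_and, Finset.mem_image]
        constructor
        · rintro ⟨hlt, hatt⟩
          obtain ⟨j', rfl⟩ := Fin.exists_castSucc_eq.mpr
            (Fin.ne_of_lt (hlt.trans (Fin.castSucc_lt_last i)))
          refine ⟨j', ⟨Fin.castSucc_lt_castSucc_iff.mp hlt, ?_⟩, rfl⟩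
          rwa [Fin.snoc_castSucc, Fin.snoc_castSucc] at hatt
        · rintro ⟨j', ⟨hlt, hatt⟩, rfl⟩
          exact ⟨Fin.castSucc_lt_castSucc_iff.mpr hlt,
            by rwa [Fin.snoc_castSucc, Fin.snoc_castSucc]⟩
      rw [e1, Finset.card_image_of_injective _ (Fin.castSucc_injective k)]
      exact hcnt i

lemma stage_legal (n t : ℕ) (ht : 2*t+1 ≤ n) :
    ∃ q : Fin (4*t) → ℕ × ℕ, IsLegalSeq n q ∧ Finset.univ.image q = stage t := by
  induction t with
  | zero =>
    refine ⟨Fin.elim0, ⟨fun i => i.elim0, fun i => i.elim0, fun i => i.elim0⟩, ?_⟩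
    have : stage 0 = ∅ := by
      ext p; rw [mem_stage]; simp; omega
    rw [this]
    simp
  | succ t ih =>
    have ht' : 2*t+1 ≤ n := by omega
    obtain ⟨q0, hq0, himg0⟩ := ih ht'
    set x1 : ℕ × ℕ := (1, 2*t+2) with hx1
    set x2 : ℕ × ℕ := (2*t+3, 1) with hx2
    set x3 : ℕ × ℕ := (2*t+2, 1) with hx3
    set x4 : ℕ × ℕ := (1, 2*t+3) with hx4
    -- attack facts
    have a12 : ¬ attacks x1 x2 := by rw [hx1, hx2, attacks_iff]; omega
    have a13 : attacks x1 x3 := by rw [hx1, hx3, attacks_iff]; omega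
    have a23 : attacks x2 x3 := by rw [hx2, hx3, attacks_iff]; omega
    have a14 : attacks x1 x4 := by rw [hx1, hx4, attacks_iff]; omega
    have a24 : attacks x2 x4 := by rw [hx2, hx4, attacks_iff]; omega
    have a34 : ¬ attacks x3 x4 := by rw [hx3, hx4, attacks_iff]; omega
    -- stage filter counts
    have c1 : ((stage t).filter fun s => attacks s x1).card = 2*t := by
      have := card_stage_filter (t := t) (x := x1) (2*t+1-1) 0
        (card_row_all fun i h1 h2 => by rw [hx1, attacks_iff]; omega)
        (card_col_none fun i h1 h2 => by rw [hx1, attacks_iff]; omega)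
      rw [this]; omega
    have c2 : ((stage t).filter fun s => attacks s x2).card = 2*t := by
      have := card_stage_filter (t := t) (x := x2) 0 (2*t+1-1)
        (card_row_none fun i h1 h2 => by rw [hx2, attacks_iff]; omega)
        (card_col_all fun i h1 h2 => by rw [hx2, attacks_iff]; omega)
      rw [this]; omega
    have c3 : ((stage t).filter fun s => attacks s x3).card = 2*t := by
      have := card_stage_filter (t := t) (x := x3) 0 (2*t+1-1)
        (card_row_none fun i h1 h2 => by rw [hx3, attacks_iff]; omega)
        (card_col_all fun i h1 h2 => by rw [hx3, attacks_iff]; omega)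
      rw [this]; omega
    have c4 : ((stage t).filter fun s => attacks s x4).card = 2*t := by
      have := card_stage_filter (t := t) (x := x4) (2*t+1-1) 0
        (card_row_all fun i h1 h2 => by rw [hx4, attacks_iff]; omega)
        (card_col_none fun i h1 h2 => by rw [hx4, attacks_iff]; omega)
      rw [this]; omega
    -- non-membership
    have m1 : x1 ∉ stage t := by rw [mem_stage]; simp [hx1]
    have m2 : x2 ∉ stage t := by rw [mem_stage]; simp [hx2]
    have m3 : x3 ∉ stage t := by rw [mem_stage]; simp [hx3]
    have m4 : x4 ∉ stage t := by rw [mem_stage]; simp [hx4]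
    have n12 : x1 ≠ x2 := by rw [hx1, hx2]; intro h; rw [Prod.ext_iff] at h; omega
    have n13 : x1 ≠ x3 := by rw [hx1, hx3]; intro h; rw [Prod.ext_iff] at h; omega
    have n14 : x1 ≠ x4 := by rw [hx1, hx4]; intro h; rw [Prod.ext_iff] at h; omega
    have n23 : x2 ≠ x3 := by rw [hx2, hx3]; intro h; rw [Prod.ext_iff] at h; omega
    have n24 : x2 ≠ x4 := by rw [hx2, hx4]; intro h; rw [Prod.ext_iff] at h; omega
    have n34 : x3 ≠ x4 := by rw [hx3, hx4]; intro h; rw [Prod.ext_iff] at h; omega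
    -- board memberships
    have b1 : x1 ∈ board n := by rw [mem_board, hx1]; omega
    have b2 : x2 ∈ board n := by rw [mem_board, hx2]; omega
    have b3 : x3 ∈ board n := by rw [mem_board, hx3]; omega
    have b4 : x4 ∈ board n := by rw [mem_board, hx4]; omega
    have nm2 : x2 ∉ insert x1 (stage t) := by
      intro h
      rcases Finset.mem_insert.mp h with h | h
      · exact n12 h.symm
      · exact m2 h
    have nm3 : x3 ∉ insert x2 (insert x1 (stage t)) := by
      intro h
      rcases Finset.mem_insert.mp h with h | h
      · exact n23 h.symm
      · rcases Finset.mem_insert.mp h with h | h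
        · exact n13 h.symm
        · exact m3 h
    have nm4 : x4 ∉ insert x3 (insert x2 (insert x1 (stage t))) := by
      intro h
      rcases Finset.mem_insert.mp h with h | h
      · exact n34 h.symm
      · rcases Finset.mem_insert.mp h with h | h
        · exact n24 h.symm
        · rcases Finset.mem_insert.mp h with h | h
          · exact n14 h.symm
          · exact m4 h
    have nf2 : ∀ (P : ℕ × ℕ → Prop) (_ : DecidablePred P),
        x2 ∉ insert x1 ((stage t).filter P) := by
      intro P _ h
      rcases Finset.mem_insert.mp h with h | h
      · exact n12 h.symm
      · exact m2 (Finset.mem_filter.mp h).1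
    -- step 1
    have hq1 : IsLegalSeq n (Fin.snoc q0 x1 : Fin (4*t+1) → ℕ × ℕ) := by
      refine legal_snoc hq0 b1 (by rw [himg0]; exact m1) ?_
      rw [himg0, c1, Nat.even_iff]; omega
    have himg1 : Finset.univ.image (Fin.snoc q0 x1 : Fin (4*t+1) → ℕ × ℕ)
        = insert x1 (stage t) := by rw [image_snoc, himg0]
    set q1 : Fin (4*t+1) → ℕ × ℕ := Fin.snoc q0 x1 with hq1def
    -- step 2
    have hq2 : IsLegalSeq n (Fin.snoc q1 x2 : Fin (4*t+2) → ℕ × ℕ) := by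
      refine legal_snoc hq1 b2 (by rw [himg1]; exact nm2) ?_
      rw [himg1, Finset.filter_insert, if_neg a12, c2, Nat.even_iff]; omega
    have himg2 : Finset.univ.image (Fin.snoc q1 x2 : Fin (4*t+2) → ℕ × ℕ)
        = insert x2 (insert x1 (stage t)) := by rw [image_snoc, himg1]
    set q2 : Fin (4*t+2) → ℕ × ℕ := Fin.snoc q1 x2 with hq2def
    -- step 3
    have hq3 : IsLegalSeq n (Fin.snoc q2 x3 : Fin (4*t+3) → ℕ × ℕ) := by
      refine legal_snoc hq2 b3 (by rw [himg2]; exact nm3) ?_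
      rw [himg2, Finset.filter_insert, if_pos a23, Finset.filter_insert, if_pos a13]
      rw [Finset.card_insert_of_notMem (nf2 _ _),
        Finset.card_insert_of_notMem (fun h => absurd (Finset.mem_filter.mp h).1 m1), c3, Nat.even_iff]
      omega
    have himg3 : Finset.univ.image (Fin.snoc q2 x3 : Fin (4*t+3) → ℕ × ℕ)
        = insert x3 (insert x2 (insert x1 (stage t))) := by rw [image_snoc, himg2]
    set q3 : Fin (4*t+3) → ℕ × ℕ := Fin.snoc q2 x3 with hq3def
    -- step 4
    have hq4 : IsLegalSeq n (Fin.snoc q3 x4 : Fin (4*t+4) → ℕ × ℕ) := by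
      refine legal_snoc hq3 b4 (by rw [himg3]; exact nm4) ?_
      rw [himg3, Finset.filter_insert, if_neg a34, Finset.filter_insert, if_pos a24,
        Finset.filter_insert, if_pos a14]
      rw [Finset.card_insert_of_notMem (nf2 _ _),
        Finset.card_insert_of_notMem (fun h => absurd (Finset.mem_filter.mp h).1 m1), c4, Nat.even_iff]
      omega
    have himg4 : Finset.univ.image (Fin.snoc q3 x4 : Fin (4*t+4) → ℕ × ℕ)
        = insert x4 (insert x3 (insert x2 (insert x1 (stage t)))) := by rw [image_snoc, himg3]
    refine ⟨Fin.snoc q3 x4, hq4, ?_⟩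
    rw [himg4]
    ext p
    rcases p with ⟨u, v⟩
    simp only [Finset.mem_insert, mem_stage, hx1, hx2, hx3, hx4, Prod.mk.injEq]
    omega

end QueensAux

namespace QueensAux
open Finset

lemma firstRowCol_eq (n : ℕ) (hn : 1 ≤ n) :
    firstRowCol n = insert (1, 1) (rowSet 2 n ∪ colSet 2 n) := by
  ext p
  rcases p with ⟨u, v⟩
  simp only [mem_firstRowCol, Finset.mem_insert, Finset.mem_union, mem_rowSet, mem_colSet,
    Prod.mk.injEq]
  omega

lemma one_one_notmem {n : ℕ} : ((1 : ℕ), (1 : ℕ)) ∉ rowSet 2 n ∪ colSet 2 n := by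
  intro h
  rcases Finset.mem_union.mp h with h | h
  · have h2 : (2 : ℕ) ≤ 1 := (mem_rowSet.mp h).2.1
    omega
  · have h2 : (2 : ℕ) ≤ 1 := (mem_colSet.mp h).2.1
    omega

lemma locked_firstRowCol (n : ℕ) (hpos : 0 < n) : Locked n (firstRowCol n) := by
  intro p hp hnp
  rcases p with ⟨a, b⟩
  have h1 : 1 ≤ a ∧ a ≤ n ∧ 1 ≤ b ∧ b ≤ n := mem_board.mp hp
  have h2 : ¬((a = 1 ∧ 1 ≤ b ∧ b ≤ n) ∨ (b = 1 ∧ 1 ≤ a ∧ a ≤ n)) :=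
    fun h => hnp (mem_firstRowCol.mpr h)
  have ha : 2 ≤ a := by omega
  have hb : 2 ≤ b := by omega
  obtain ⟨ha1, ha2, hb1, hb2⟩ := h1
  -- row count
  have hR : ((rowSet 2 n).filter fun s => attacks s (a, b)).card
      = 1 + (if a + b ≤ n + 1 then 1 else 0) + (if a < b then 1 else 0) := by
    rw [rowSet, Finset.filter_image, Finset.card_image_of_injective _ row_inj]
    rw [Finset.filter_congr (fun i hi => show attacks (1, i) (a, b) ↔
        (i = b ∨ 1 + i = a + b ∨ 1 + b = a + i) by
      have hi' := Finset.mem_Icc.mp hi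
      rw [attacks_iff]; omega)]
    split_ifs with hd hl hl
    · rw [show (Finset.Icc 2 n).filter (fun i => i = b ∨ 1 + i = a + b ∨ 1 + b = a + i)
          = {b, a + b - 1, b + 1 - a} from by
        ext i
        simp only [Finset.mem_filter, Finset.mem_Icc, Finset.mem_insert, Finset.mem_singleton]
        omega]
      rw [Finset.card_insert_of_notMem (by simp; omega),
        Finset.card_insert_of_notMem (by simp; omega), Finset.card_singleton]
    · rw [show (Finset.Icc 2 n).filter (fun i => i = b ∨ 1 + i = a + b ∨ 1 + b = a + i)
          = {b, a + b - 1} from by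
        ext i
        simp only [Finset.mem_filter, Finset.mem_Icc, Finset.mem_insert, Finset.mem_singleton]
        omega]
      rw [Finset.card_insert_of_notMem (by simp; omega), Finset.card_singleton]
    · rw [show (Finset.Icc 2 n).filter (fun i => i = b ∨ 1 + i = a + b ∨ 1 + b = a + i)
          = {b, b + 1 - a} from by
        ext i
        simp only [Finset.mem_filter, Finset.mem_Icc, Finset.mem_insert, Finset.mem_singleton]
        omega]
      rw [Finset.card_insert_of_notMem (by simp; omega), Finset.card_singleton]
    · rw [show (Finset.Icc 2 n).filter (fun i => i = b ∨ 1 + i = a + b ∨ 1 + b = a + i)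
          = {b} from by
        ext i
        simp only [Finset.mem_filter, Finset.mem_Icc, Finset.mem_singleton]
        omega]
      rw [Finset.card_singleton]
  -- col count
  have hC : ((colSet 2 n).filter fun s => attacks s (a, b)).card
      = 1 + (if a + b ≤ n + 1 then 1 else 0) + (if b < a then 1 else 0) := by
    rw [colSet, Finset.filter_image, Finset.card_image_of_injective _ col_inj]
    rw [Finset.filter_congr (fun i hi => show attacks (i, 1) (a, b) ↔
        (i = a ∨ i + 1 = a + b ∨ i + b = a + 1) by
      have hi' := Finset.mem_Icc.mp hi
      rw [attacks_iff]; omega)]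
    split_ifs with hd hl hl
    · rw [show (Finset.Icc 2 n).filter (fun i => i = a ∨ i + 1 = a + b ∨ i + b = a + 1)
          = {a, a + b - 1, a + 1 - b} from by
        ext i
        simp only [Finset.mem_filter, Finset.mem_Icc, Finset.mem_insert, Finset.mem_singleton]
        omega]
      rw [Finset.card_insert_of_notMem (by simp; omega),
        Finset.card_insert_of_notMem (by simp; omega), Finset.card_singleton]
    · rw [show (Finset.Icc 2 n).filter (fun i => i = a ∨ i + 1 = a + b ∨ i + b = a + 1)
          = {a, a + b - 1} from by
        ext i
        simp only [Finset.mem_filter, Finset.mem_Icc, Finset.mem_insert, Finset.mem_singleton]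
        omega]
      rw [Finset.card_insert_of_notMem (by simp; omega), Finset.card_singleton]
    · rw [show (Finset.Icc 2 n).filter (fun i => i = a ∨ i + 1 = a + b ∨ i + b = a + 1)
          = {a, a + 1 - b} from by
        ext i
        simp only [Finset.mem_filter, Finset.mem_Icc, Finset.mem_insert, Finset.mem_singleton]
        omega]
      rw [Finset.card_insert_of_notMem (by simp; omega), Finset.card_singleton]
    · rw [show (Finset.Icc 2 n).filter (fun i => i = a ∨ i + 1 = a + b ∨ i + b = a + 1)
          = {a} from by
        ext i
        simp only [Finset.mem_filter, Finset.mem_Icc, Finset.mem_singleton]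
        omega]
      rw [Finset.card_singleton]
  have hdisj : Disjoint ((rowSet 2 n).filter fun s => attacks s (a, b))
      ((colSet 2 n).filter fun s => attacks s (a, b)) :=
    disj_row_col.mono (Finset.filter_subset _ _) (Finset.filter_subset _ _)
  rw [firstRowCol_eq n (by omega), Finset.filter_insert]
  have h11 : attacks (1, 1) (a, b) ↔ a = b := by rw [attacks_iff]; omega
  by_cases hab : attacks (1, 1) (a, b)
  · rw [if_pos hab]
    have hd := h11.mp hab
    rw [Finset.card_insert_of_notMem
      (fun h => one_one_notmem ((Finset.filter_subset _ _) h)),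
      Finset.filter_union, Finset.card_union_of_disjoint hdisj, hR, hC, Nat.odd_iff]
    split_ifs <;> omega
  · rw [if_neg hab]
    have hd : a ≠ b := fun h => hab (h11.mpr h)
    rw [Finset.filter_union, Finset.card_union_of_disjoint hdisj, hR, hC, Nat.odd_iff]
    split_ifs <;> omega

end QueensAux


open QueensAux

/-- For odd positive `n`, the first row and column form a legal, locked game position. -/
theorem odd_rowcol_locked (n : ℕ) (hpos : 0 < n) (hodd : Odd n) :
    ∃ (k : ℕ) (q : Fin k → ℕ × ℕ), IsLegalSeq n q ∧
      Finset.univ.image q = firstRowCol n ∧ Locked n (firstRowCol n) := by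
  obtain ⟨m, hm⟩ := hodd
  obtain ⟨q0, hq0, himg0⟩ := stage_legal n m (by omega)
  have hb : ((1 : ℕ), (1 : ℕ)) ∈ board n := mem_board.mpr ⟨Nat.le_refl 1, hpos, Nat.le_refl 1, hpos⟩
  have hnm : ((1 : ℕ), (1 : ℕ)) ∉ stage m := by
    intro h
    rcases mem_stage.mp h with ⟨h1, h2, h3⟩ | ⟨h1, h2, h3⟩ <;>
      · have h2' : (2 : ℕ) ≤ 1 := h2
        omega
  have hev : Even (((stage m).filter fun s => attacks s ((1 : ℕ), (1 : ℕ))).card) := by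
    have := card_stage_filter (t := m) (x := ((1 : ℕ), (1 : ℕ))) (2*m+1-1) (2*m+1-1)
      (card_row_all fun i hi1 hi2 => by rw [attacks_iff]; omega)
      (card_col_all fun i hi1 hi2 => by rw [attacks_iff]; omega)
    rw [this, Nat.even_iff]; omega
  refine ⟨4*m+1, Fin.snoc q0 (1, 1),
    legal_snoc hq0 hb (by rw [himg0]; exact hnm) (by rw [himg0]; exact hev), ?_, locked_firstRowCol n hpos⟩
  rw [image_snoc, himg0, firstRowCol_eq n (by omega)]
  congr 1
  rw [stage, hm]
end

section
/- For every even integer n > 2, there exists a legal game sequence on the n×n chessboard whose set of placed squares is exactly S = {(1,i) : 2 ≤ i ≤ n−1} ∪ {(i,1) : 2 ≤ i ≤ n−1} ∪ {(n,n)}, and this set S is locked. -/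
/-- The squares `{(1,i) : 2 ≤ i ≤ n-1} ∪ {(i,1) : 2 ≤ i ≤ n-1} ∪ {(n,n)}`. -/
def evenLockedSet (n : ℕ) : Finset (ℕ × ℕ) :=
  (((Finset.Icc 2 (n - 1)).image fun i => (1, i)) ∪
    ((Finset.Icc 2 (n - 1)).image fun i => (i, 1))) ∪ {(n, n)}

section AuxEvenLocked
open Finset

def Qf (n j : ℕ) : ℕ × ℕ :=
  if j = 0 then (n, n)
  else if j % 2 = 1 then (1, (j + 3) / 2)
  else if j % 4 = 2 then ((j + 4) / 2, 1)
  else (j / 2, 1)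

lemma attacks_Qf (n j t : ℕ) (hn : 4 ≤ n) (hne : n % 2 = 0) (hj : j < t) (ht : t ≤ 2 * n - 4) :
    attacks (Qf n j) (Qf n t) ↔
      (1 ≤ j ∧ j % 2 = t % 2) ∨ (t % 4 = 0 ∧ j = t - 3) ∨ (t % 4 = 3 ∧ j = t - 1) := by
  unfold Qf
  split_ifs <;> simp_all [attacks, Prod.ext_iff] <;> omega

lemma cntOdd (t : ℕ) : ((range t).filter fun j => 1 ≤ j ∧ j % 2 = 1).card = t / 2 := by
  induction t with
  | zero => simp
  | succ m ih =>
    rw [Finset.range_add_one, Finset.filter_insert]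
    by_cases h : 1 ≤ m ∧ m % 2 = 1
    · rw [if_pos h, Finset.card_insert_of_notMem (by simp), ih]; omega
    · rw [if_neg h, ih]; omega

lemma cntEven (t : ℕ) : ((range t).filter fun j => 1 ≤ j ∧ j % 2 = 0).card = (t + 1) / 2 - 1 := by
  induction t with
  | zero => simp
  | succ m ih =>
    rw [Finset.range_add_one, Finset.filter_insert]
    by_cases h : 1 ≤ m ∧ m % 2 = 0
    · rw [if_pos h, Finset.card_insert_of_notMem (by simp), ih]; omega
    · rw [if_neg h, ih]; omega

lemma card_filter_eq (s : Finset ℕ) (a : ℕ) :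
    (s.filter fun i => i = a).card = if a ∈ s then 1 else 0 := by
  rw [Finset.filter_eq', apply_ite Finset.card]; simp

lemma even_attackers (n t : ℕ) (hn : 4 ≤ n) (hne : n % 2 = 0) (ht : t ≤ 2 * n - 4) :
    Even (((Finset.range t).filter fun j => attacks (Qf n j) (Qf n t)).card) := by
  have hcong : ((Finset.range t).filter fun j => attacks (Qf n j) (Qf n t)) =
      (Finset.range t).filter fun j =>
        (1 ≤ j ∧ j % 2 = t % 2) ∨ (t % 4 = 0 ∧ j = t - 3) ∨ (t % 4 = 3 ∧ j = t - 1) :=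
    filter_congr fun j hj => by
      simpa using attacks_Qf n j t hn hne (Finset.mem_range.mp hj) ht
  rw [hcong]
  rcases (show t % 4 = 0 ∨ t % 4 = 1 ∨ t % 4 = 2 ∨ t % 4 = 3 by omega) with h4 | h4 | h4 | h4
  · rcases Nat.eq_zero_or_pos t with rfl | htpos
    · simp
    · rw [filter_congr (fun j hj => show _ ↔ (1 ≤ j ∧ j % 2 = 0) ∨ j = t - 3 by
        simp only [Finset.mem_range] at hj; constructor <;> intro h <;> omega)]
      rw [filter_or, card_union_of_disjoint, cntEven, card_filter_eq]
      · rw [Nat.even_iff]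
        have : t - 3 ∈ range t := by rw [mem_range]; omega
        rw [if_pos this]; omega
      · simp only [Finset.disjoint_left, mem_filter]
        rintro x ⟨_, _, hx⟩ ⟨_, rfl⟩; omega
  · rw [filter_congr (fun j hj => show _ ↔ (1 ≤ j ∧ j % 2 = 1) by
      simp only [Finset.mem_range] at hj; constructor <;> intro h <;> omega)]
    rw [cntOdd, Nat.even_iff]; omega
  · rw [filter_congr (fun j hj => show _ ↔ (1 ≤ j ∧ j % 2 = 0) by
      simp only [Finset.mem_range] at hj; constructor <;> intro h <;> omega)]
    rw [cntEven, Nat.even_iff]; omega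
  · rw [filter_congr (fun j hj => show _ ↔ (1 ≤ j ∧ j % 2 = 1) ∨ j = t - 1 by
      simp only [Finset.mem_range] at hj; constructor <;> intro h <;> omega)]
    rw [filter_or, card_union_of_disjoint, cntOdd, card_filter_eq]
    · rw [Nat.even_iff]
      have : t - 1 ∈ range t := by rw [mem_range]; omega
      rw [if_pos this]; omega
    · simp only [Finset.disjoint_left, mem_filter]
      rintro x ⟨_, _, hx⟩ ⟨_, rfl⟩; omega

lemma Qf_inj (n : ℕ) (hn : 4 ≤ n) (a b : ℕ) (h : Qf n a = Qf n b) : a = b := by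
  unfold Qf at h
  split_ifs at h <;> simp_all [Prod.ext_iff] <;> omega

lemma Qf_mem_board (n j : ℕ) (hn : 4 ≤ n) (hj : j ≤ 2 * n - 4) : Qf n j ∈ board n := by
  unfold Qf board
  split_ifs <;> simp [Finset.mem_Icc] <;> omega

lemma Qf_mem_S (n m : ℕ) (hn : 4 ≤ n) (hne : n % 2 = 0) (hm : m ≤ 2 * n - 4) :
    Qf n m ∈ evenLockedSet n := by
  unfold Qf evenLockedSet
  split_ifs with h0 h1 h2
  · simp
  · apply Finset.mem_union_left; apply Finset.mem_union_left
    simp only [Finset.mem_image, Finset.mem_Icc]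
    exact ⟨(m + 3) / 2, by omega, rfl⟩
  · apply Finset.mem_union_left; apply Finset.mem_union_right
    simp only [Finset.mem_image, Finset.mem_Icc]
    exact ⟨(m + 4) / 2, by omega, rfl⟩
  · apply Finset.mem_union_left; apply Finset.mem_union_right
    simp only [Finset.mem_image, Finset.mem_Icc]
    exact ⟨m / 2, by omega, rfl⟩

lemma S_sub (n : ℕ) (hn : 4 ≤ n) (hne : n % 2 = 0) (p : ℕ × ℕ) (hp : p ∈ evenLockedSet n) :
    ∃ m ≤ 2 * n - 4, Qf n m = p := by
  unfold evenLockedSet at hp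
  simp only [Finset.mem_union, Finset.mem_image, Finset.mem_Icc, Finset.mem_singleton] at hp
  rcases hp with (⟨v, hv, rfl⟩ | ⟨v, hv, rfl⟩) | rfl
  · refine ⟨2 * v - 3, by omega, ?_⟩
    unfold Qf
    rw [if_neg (by omega), if_pos (by omega)]
    simp only [Prod.mk.injEq, true_and]; omega
  · rcases Nat.even_or_odd v with he | ho
    · refine ⟨2 * v, by rw [Nat.even_iff] at he; omega, ?_⟩
      unfold Qf
      rw [Nat.even_iff] at he
      rw [if_neg (by omega), if_neg (by omega), if_neg (by omega)]
      simp only [Prod.mk.injEq, and_true]; omega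
    · refine ⟨2 * v - 4, by omega, ?_⟩
      unfold Qf
      rw [Nat.odd_iff] at ho
      rw [if_neg (by omega), if_neg (by omega), if_pos (by omega)]
      simp only [Prod.mk.injEq, and_true]; omega
  · exact ⟨0, by omega, rfl⟩

lemma card_filter_tri (s : Finset ℕ) (a b c : ℕ) (hab : a ≠ b) (hac : a ≠ c) (hbc : b ≠ c) :
    (s.filter fun i => i = a ∨ i = b ∨ i = c).card =
      (if a ∈ s then 1 else 0) + (if b ∈ s then 1 else 0) + (if c ∈ s then 1 else 0) := by
  rw [filter_or, filter_or, card_union_of_disjoint, card_union_of_disjoint,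
    card_filter_eq, card_filter_eq, card_filter_eq, add_assoc]
  · simp only [Finset.disjoint_left, mem_filter]; rintro x ⟨_, rfl⟩ ⟨_, h⟩; tauto
  · simp only [Finset.disjoint_left, mem_filter, mem_union]
    rintro x ⟨_, rfl⟩ h
    rcases h with ⟨_, h⟩ | ⟨_, h⟩ <;> [exact hab h; exact hac h]

lemma locked_main (n : ℕ) (hn3 : 3 ≤ n) (hne : n % 2 = 0) :
    ∀ p ∈ board n, p ∉ evenLockedSet n →
      Odd (((evenLockedSet n).filter fun s => attacks s p).card) := by
  rintro ⟨x, y⟩ hp hps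
  simp only [board, Finset.mem_product, Finset.mem_Icc] at hp
  obtain ⟨⟨hx1, hxn⟩, hy1, hyn⟩ := hp
  have h1 : ¬(x = 1 ∧ 2 ≤ y ∧ y ≤ n - 1) := by
    rintro ⟨rfl, h2, h3⟩
    exact hps (by
      unfold evenLockedSet
      apply Finset.mem_union_left; apply Finset.mem_union_left
      simp only [Finset.mem_image, Finset.mem_Icc]
      exact ⟨y, ⟨h2, h3⟩, rfl⟩)
  have h2 : ¬(y = 1 ∧ 2 ≤ x ∧ x ≤ n - 1) := by
    rintro ⟨rfl, h2, h3⟩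
    exact hps (by
      unfold evenLockedSet
      apply Finset.mem_union_left; apply Finset.mem_union_right
      simp only [Finset.mem_image, Finset.mem_Icc]
      exact ⟨x, ⟨h2, h3⟩, rfl⟩)
  have h3 : ¬(x = n ∧ y = n) := by
    rintro ⟨rfl, rfl⟩
    exact hps (by unfold evenLockedSet; exact Finset.mem_union_right _ (by simp))
  have hdAB : Disjoint ((Finset.Icc 2 (n - 1)).image fun i => ((1 : ℕ), i))
      ((Finset.Icc 2 (n - 1)).image fun i => (i, (1 : ℕ))) := by
    simp only [Finset.disjoint_left, Finset.mem_image, Finset.mem_Icc]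
    rintro q ⟨i, hi, rfl⟩ ⟨j, hj, hq⟩
    have := congrArg Prod.snd hq
    simp at this; omega
  have hdC : Disjoint
      ((((Finset.Icc 2 (n - 1)).image fun i => ((1:ℕ), i)) ∪
        ((Finset.Icc 2 (n - 1)).image fun i => (i, (1:ℕ))))) ({((n:ℕ), (n:ℕ))} : Finset (ℕ × ℕ)) := by
    simp only [Finset.disjoint_singleton_right, Finset.mem_union, Finset.mem_image,
      Finset.mem_Icc, not_or, not_exists]
    constructor <;> rintro i ⟨hi, hq⟩ <;>
      [exact absurd (congrArg Prod.fst hq) (by simp; omega);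
       exact absurd (congrArg Prod.snd hq) (by simp; omega)]
  unfold evenLockedSet
  rw [Finset.filter_union,
    Finset.card_union_of_disjoint (Finset.disjoint_filter_filter hdC),
    Finset.filter_union,
    Finset.card_union_of_disjoint (Finset.disjoint_filter_filter hdAB),
    Finset.filter_image, Finset.filter_image,
    Finset.card_image_of_injective _ (fun a b h => by simpa using h),
    Finset.card_image_of_injective _ (fun a b h => by simpa using h),
    Finset.filter_singleton]
  rcases (show x = 1 ∧ (y = 1 ∨ y = n) ∨ y = 1 ∧ x = n ∨ (2 ≤ x ∧ 2 ≤ y) by omega) with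
    ⟨rfl, rfl | rfl⟩ | ⟨rfl, rfl⟩ | ⟨hx2, hy2⟩
  · -- p = (1,1)
    rw [Finset.filter_true_of_mem (fun i hi => by
        simp only [Finset.mem_Icc] at hi
        simp [attacks, Prod.ext_iff] <;> omega),
      Finset.filter_true_of_mem (fun i hi => by
        simp only [Finset.mem_Icc] at hi
        simp [attacks, Prod.ext_iff] <;> omega),
      if_pos (by simp [attacks, Prod.ext_iff] <;> omega)]
    simp only [Nat.card_Icc, Finset.card_singleton]
    rw [Nat.odd_iff]; omega
  · -- p = (1,n)
    rw [Finset.filter_true_of_mem (fun i hi => by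
        simp only [Finset.mem_Icc] at hi
        simp [attacks, Prod.ext_iff] <;> omega),
      Finset.filter_false_of_mem (fun i hi => by
        simp only [Finset.mem_Icc] at hi
        simp [attacks, Prod.ext_iff] <;> omega),
      if_pos (by simp [attacks, Prod.ext_iff] <;> omega)]
    simp only [Nat.card_Icc, Finset.card_empty, Finset.card_singleton]
    rw [Nat.odd_iff]; omega
  · -- p = (n,1)
    rw [Finset.filter_false_of_mem (fun i hi => by
        simp only [Finset.mem_Icc] at hi
        simp [attacks, Prod.ext_iff] <;> omega),
      Finset.filter_true_of_mem (fun i hi => by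
        simp only [Finset.mem_Icc] at hi
        simp [attacks, Prod.ext_iff] <;> omega),
      if_pos (by simp [attacks, Prod.ext_iff] <;> omega)]
    simp only [Nat.card_Icc, Finset.card_empty, Finset.card_singleton]
    rw [Nat.odd_iff]; omega
  · -- general case
    rw [Finset.filter_congr (fun i hi =>
        show attacks (1, i) (x, y) ↔ i = y ∨ i = x + y - 1 ∨ i = y + 1 - x by
        simp only [Finset.mem_Icc] at hi
        simp [attacks, Prod.ext_iff] <;> omega),
      Finset.filter_congr (fun i hi =>
        show attacks (i, 1) (x, y) ↔ i = x ∨ i = x + y - 1 ∨ i = x + 1 - y by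
        simp only [Finset.mem_Icc] at hi
        simp [attacks, Prod.ext_iff] <;> omega),
      card_filter_tri _ _ _ _ (by omega) (by omega) (by omega),
      card_filter_tri _ _ _ _ (by omega) (by omega) (by omega),
      if_congr (show attacks (n, n) (x, y) ↔ x = n ∨ y = n ∨ x = y by
        simp [attacks, Prod.ext_iff] <;> omega) rfl rfl]
    simp only [Finset.mem_Icc, Finset.card_singleton, Finset.card_empty, apply_ite Finset.card]
    rw [Nat.odd_iff]
    split_ifs <;> omega

lemma card_fin_filter {k : ℕ} (P : ℕ → Prop) [DecidablePred P] :
    (Finset.univ.filter fun j : Fin k => P j.val).card = ((Finset.range k).filter P).card := by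
  rw [← Finset.card_image_of_injective _ Fin.val_injective]
  congr 1; ext j
  simp only [Finset.mem_image, Finset.mem_filter, Finset.mem_univ, true_and, Finset.mem_range]
  constructor
  · rintro ⟨a, hP, rfl⟩; exact ⟨a.isLt, hP⟩
  · rintro ⟨hj, hP⟩; exact ⟨⟨j, hj⟩, hP, rfl⟩

end AuxEvenLocked

/-- For even `n > 2`, the set `evenLockedSet n` is a legal, locked game position. -/
theorem even_locked_position (n : ℕ) (hn : 2 < n) (heven : Even n) :
    ∃ (k : ℕ) (q : Fin k → ℕ × ℕ), IsLegalSeq n q ∧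
      Finset.univ.image q = evenLockedSet n ∧ Locked n (evenLockedSet n) := by
  have hne : n % 2 = 0 := Nat.even_iff.mp heven
  have hn4 : 4 ≤ n := by omega
  refine ⟨2 * n - 3, fun i => Qf n i.val, ⟨?_, ?_, ?_⟩, ?_, ?_⟩
  · intro a b h
    exact Fin.ext (Qf_inj n hn4 a.val b.val h)
  · intro i
    exact Qf_mem_board n i.val hn4 (by have := i.isLt; omega)
  · intro i
    have h1 : (Finset.univ.filter fun j : Fin (2 * n - 3) =>
          j < i ∧ attacks (Qf n j.val) (Qf n i.val)).card =
        ((Finset.range (2 * n - 3)).filter fun m =>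
          m < i.val ∧ attacks (Qf n m) (Qf n i.val)).card :=
      card_fin_filter fun m => m < i.val ∧ attacks (Qf n m) (Qf n i.val)
    rw [h1]
    have h2 : ((Finset.range (2 * n - 3)).filter fun m =>
          m < i.val ∧ attacks (Qf n m) (Qf n i.val)) =
        ((Finset.range i.val).filter fun m => attacks (Qf n m) (Qf n i.val)) := by
      ext m
      simp only [Finset.mem_filter, Finset.mem_range]
      constructor
      · rintro ⟨_, hm, ha⟩; exact ⟨hm, ha⟩
      · rintro ⟨hm, ha⟩; exact ⟨by have := i.isLt; omega, hm, ha⟩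
    rw [h2]
    exact even_attackers n i.val hn4 hne (by have := i.isLt; omega)
  · ext p
    simp only [Finset.mem_image, Finset.mem_univ, true_and]
    constructor
    · rintro ⟨a, rfl⟩
      exact Qf_mem_S n a.val hn4 hne (by have := a.isLt; omega)
    · intro hp
      obtain ⟨m, hm, hQ⟩ := S_sub n hn4 hne p hp
      exact ⟨⟨m, by omega⟩, hQ⟩
  · exact locked_main n (by omega) hne
end

section
/- For every odd positive integer n, there exists a legal game sequence of length at most 2n − 1 on the n×n chessboard whose set of placed squares is locked; and for every even integer n > 2, there exists a legal game sequence of length at most 2n − 3 whose set of placed squares is locked. -/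
/-! helper combinators -/

def rowSeg (r l u : ℕ) : Finset (ℕ × ℕ) := (Finset.Icc l u).image fun b => (r, b)
def colSeg (c l u : ℕ) : Finset (ℕ × ℕ) := (Finset.Icc l u).image fun a => (a, c)

lemma mem_rowSeg {p : ℕ × ℕ} {r l u : ℕ} :
    p ∈ rowSeg r l u ↔ p.1 = r ∧ l ≤ p.2 ∧ p.2 ≤ u := by
  unfold rowSeg
  constructor
  · intro h
    rw [Finset.mem_image] at h
    obtain ⟨a, ha, rfl⟩ := h
    rw [Finset.mem_Icc] at ha
    exact ⟨rfl, ha.1, ha.2⟩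
  · rintro ⟨h1, h2, h3⟩
    rw [Finset.mem_image]
    exact ⟨p.2, Finset.mem_Icc.2 ⟨h2, h3⟩, by rw [← h1]⟩

lemma mem_colSeg {p : ℕ × ℕ} {c l u : ℕ} :
    p ∈ colSeg c l u ↔ p.2 = c ∧ l ≤ p.1 ∧ p.1 ≤ u := by
  unfold colSeg
  constructor
  · intro h
    rw [Finset.mem_image] at h
    obtain ⟨a, ha, rfl⟩ := h
    rw [Finset.mem_Icc] at ha
    exact ⟨rfl, ha.1, ha.2⟩
  · rintro ⟨h1, h2, h3⟩
    rw [Finset.mem_image]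
    exact ⟨p.1, Finset.mem_Icc.2 ⟨h2, h3⟩, by rw [← h1]⟩

lemma count3 (l u x y z : ℕ) (hxy : x ≠ y) (hxz : x ≠ z) (hyz : y ≠ z) :
    ((Finset.Icc l u).filter fun a => a = x ∨ a = y ∨ a = z).card
      = (if l ≤ x ∧ x ≤ u then 1 else 0) + (if l ≤ y ∧ y ≤ u then 1 else 0)
        + (if l ≤ z ∧ z ≤ u then 1 else 0) := by
  rw [Finset.filter_or, Finset.filter_or, Finset.filter_eq', Finset.filter_eq',
    Finset.filter_eq']
  simp only [Finset.mem_Icc]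
  split_ifs <;>
    simp_all [Finset.card_union_of_disjoint, Finset.disjoint_left, Finset.union_comm,
        Finset.card_insert_of_notMem, Ne.symm hxy, Ne.symm hxz, Ne.symm hyz]

lemma filter_rowSeg_card (r l u : ℕ) (P : ℕ × ℕ → Prop) [DecidablePred P] :
    ((rowSeg r l u).filter P).card = ((Finset.Icc l u).filter fun a => P (r,a)).card := by
  unfold rowSeg
  rw [Finset.filter_image]
  exact Finset.card_image_of_injective _ (fun a b h => by simpa using congrArg Prod.snd h)

lemma filter_colSeg_card (c l u : ℕ) (P : ℕ × ℕ → Prop) [DecidablePred P] :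
    ((colSeg c l u).filter P).card = ((Finset.Icc l u).filter fun a => P (a,c)).card := by
  unfold colSeg
  rw [Finset.filter_image]
  exact Finset.card_image_of_injective _ (fun a b h => by simpa using congrArg Prod.fst h)

/-- attackers of `(i,j)` within a row segment of a different row `r` -/
lemma rowSeg_count (r l u i j : ℕ) (hr : r ≠ i) (hl : 1 ≤ l) (hj : 1 ≤ j) :
    ((rowSeg r l u).filter fun p => attacks p (i,j)).card =
      (if l ≤ j ∧ j ≤ u then 1 else 0) + (if l ≤ i+j-r ∧ i+j-r ≤ u then 1 else 0)
        + (if l ≤ r+j-i ∧ r+j-i ≤ u then 1 else 0) := by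
  rw [filter_rowSeg_card]
  rw [Finset.filter_congr (q := fun a => a = j ∨ a = i+j-r ∨ a = r+j-i)
    (fun a ha => by
      rw [Finset.mem_Icc] at ha
      unfold attacks
      simp only [Prod.ext_iff, ne_eq, Prod.fst, Prod.snd]
      constructor
      · rintro ⟨h1, h2⟩; omega
      · intro h; omega)]
  exact count3 l u j (i+j-r) (r+j-i) (by omega) (by omega) (by omega)

/-- attackers of `(i,j)` within a column segment of a different column `c` -/
lemma colSeg_count (c l u i j : ℕ) (hc : c ≠ j) (hl : 1 ≤ l) (hi : 1 ≤ i) :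
    ((colSeg c l u).filter fun p => attacks p (i,j)).card =
      (if l ≤ i ∧ i ≤ u then 1 else 0) + (if l ≤ i+j-c ∧ i+j-c ≤ u then 1 else 0)
        + (if l ≤ c+i-j ∧ c+i-j ≤ u then 1 else 0) := by
  rw [filter_colSeg_card]
  rw [Finset.filter_congr (q := fun a => a = i ∨ a = i+j-c ∨ a = c+i-j)
    (fun a ha => by
      rw [Finset.mem_Icc] at ha
      unfold attacks
      simp only [Prod.ext_iff, ne_eq, Prod.fst, Prod.snd]
      constructor
      · rintro ⟨h1, h2⟩; omega
      · intro h; omega)]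
  exact count3 l u i (i+j-c) (c+i-j) (by omega) (by omega) (by omega)

/-- attackers of `(r,j)` within a row segment of the same row `r`, `j` outside -/
lemma rowSeg_count_same (r l u j : ℕ) (hj : j < l ∨ u < j) :
    ((rowSeg r l u).filter fun p => attacks p (r,j)).card = u+1-l := by
  rw [filter_rowSeg_card, Finset.filter_true_of_mem (fun a ha => by
    rw [Finset.mem_Icc] at ha
    exact ⟨fun hc => by simp [Prod.ext_iff] at hc; omega, Or.inl rfl⟩)]
  simp [Nat.card_Icc]

/-- attackers of `(i,c)` within a column segment of the same column `c`, `i` outside -/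
lemma colSeg_count_same (c l u i : ℕ) (hi : i < l ∨ u < i) :
    ((colSeg c l u).filter fun p => attacks p (i,c)).card = u+1-l := by
  rw [filter_colSeg_card, Finset.filter_true_of_mem (fun a ha => by
    rw [Finset.mem_Icc] at ha
    exact ⟨fun hc => by simp [Prod.ext_iff] at hc; omega, Or.inr (Or.inl rfl)⟩)]
  simp [Nat.card_Icc]

lemma card_filter_insert_pos {P : ℕ×ℕ → Prop} [DecidablePred P] {a : ℕ×ℕ} {s : Finset (ℕ×ℕ)}
    (ha : P a) (h : a ∉ s) : ((insert a s).filter P).card = (s.filter P).card + 1 := by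
  rw [Finset.filter_insert, if_pos ha,
    Finset.card_insert_of_notMem (fun hm => h (Finset.mem_of_mem_filter _ hm))]

lemma card_filter_insert_neg {P : ℕ×ℕ → Prop} [DecidablePred P] {a : ℕ×ℕ} {s : Finset (ℕ×ℕ)}
    (ha : ¬ P a) : ((insert a s).filter P).card = (s.filter P).card := by
  rw [Finset.filter_insert, if_neg ha]

/-- legality count reduces to counting attackers in the prefix image -/
lemma legal_count {k : ℕ} (f : ℕ → ℕ × ℕ)
    (hinj : ∀ s t, s < k → t < k → f s = f t → s = t) (i : Fin k) :
    (Finset.univ.filter fun j : Fin k => j < i ∧ attacks (f j.val) (f i.val)).card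
      = (((Finset.range i.val).image f).filter fun p => attacks p (f i.val)).card := by
  rw [Finset.filter_image]
  rw [Finset.card_image_of_injOn (fun s hs t ht hst => by
    rw [Finset.mem_coe, Finset.mem_filter, Finset.mem_range] at hs ht
    exact hinj s t (lt_trans hs.1 i.isLt) (lt_trans ht.1 i.isLt) hst)]
  apply Finset.card_bij (fun (j : Fin k) _ => j.val)
  · intro j hj
    rw [Finset.mem_filter] at hj ⊢
    rw [Finset.mem_range]
    exact ⟨hj.2.1, hj.2.2⟩
  · intro a ha b hb hab
    exact Fin.val_injective hab
  · intro t ht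
    rw [Finset.mem_filter, Finset.mem_range] at ht
    exact ⟨⟨t, lt_trans ht.1 i.isLt⟩, by
      rw [Finset.mem_filter]
      exact ⟨Finset.mem_univ _, ht.1, ht.2⟩, rfl⟩

lemma univ_image_eq (k : ℕ) (f : ℕ → ℕ × ℕ) :
    Finset.univ.image (fun t : Fin k => f t.val) = (Finset.range k).image f := by
  ext p
  simp only [Finset.mem_image, Finset.mem_univ, true_and, Finset.mem_range]
  constructor
  · rintro ⟨t, h⟩; exact ⟨t.val, t.isLt, h⟩
  · rintro ⟨t, ht, h⟩; exact ⟨⟨t, ht⟩, h⟩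

/-! ## odd case -/

def fOdd (m t : ℕ) : ℕ × ℕ :=
  if t = 4*m then (1,1)
  else if t % 4 = 0 then (1, 2*(t/4)+2)
  else if t % 4 = 1 then (2*(t/4)+3, 1)
  else if t % 4 = 2 then (1, 2*(t/4)+3)
  else (2*(t/4)+2, 1)

lemma fOdd0 {m s : ℕ} (h : s < m) : fOdd m (4*s) = (1, 2*s+2) := by
  have h1 : 4*s ≠ 4*m := by omega
  have h2 : (4*s) % 4 = 0 := by omega
  have h3 : (4*s) / 4 = s := by omega
  simp [fOdd, h1, h2, h3]

lemma fOdd1 {m s : ℕ} (h : s < m) : fOdd m (4*s+1) = (2*s+3, 1) := by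
  have h1 : 4*s+1 ≠ 4*m := by omega
  have h2 : (4*s+1) % 4 = 1 := by omega
  have h3 : (4*s+1) / 4 = s := by omega
  simp [fOdd, h1, h2, h3]

lemma fOdd2 {m s : ℕ} (h : s < m) : fOdd m (4*s+2) = (1, 2*s+3) := by
  have h1 : 4*s+2 ≠ 4*m := by omega
  have h2 : (4*s+2) % 4 = 2 := by omega
  have h3 : (4*s+2) / 4 = s := by omega
  simp [fOdd, h1, h2, h3]

lemma fOdd3 {m s : ℕ} (h : s < m) : fOdd m (4*s+3) = (2*s+2, 1) := by
  have h1 : 4*s+3 ≠ 4*m := by omega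
  have h2 : (4*s+3) % 4 = 3 := by omega
  have h3 : (4*s+3) / 4 = s := by omega
  simp [fOdd, h1, h2, h3]

lemma fOddLast (m : ℕ) : fOdd m (4*m) = (1,1) := by simp [fOdd]

lemma fOdd_inj (m : ℕ) : ∀ s t, s ≤ 4*m → t ≤ 4*m → fOdd m s = fOdd m t → s = t := by
  intro s t hs ht h
  unfold fOdd at h
  split_ifs at h <;> injection h with h1 h2 <;> omega

lemma fOdd_mem (m : ℕ) : ∀ t, t ≤ 4*m → fOdd m t ∈ board (2*m+1) := by
  intro t ht
  unfold fOdd board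
  split_ifs <;> simp [Finset.mem_product, Finset.mem_Icc] <;> omega

lemma image_block (m : ℕ) : ∀ s, s ≤ m →
    (Finset.range (4*s)).image (fOdd m) = rowSeg 1 2 (2*s+1) ∪ colSeg 1 2 (2*s+1) := by
  intro s
  induction s with
  | zero =>
    intro _
    rw [show 4*0 = 0 by rfl, Finset.range_zero, Finset.image_empty]
    ext p
    simp only [Finset.notMem_empty, Finset.mem_union, mem_rowSeg, mem_colSeg, false_iff]
    omega
  | succ s ih =>
    intro hs
    have hsm : s < m := by omega
    rw [show 4*(s+1) = (4*s+3)+1 by ring, Finset.range_add_one, Finset.image_insert,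
       show 4*s+3 = (4*s+2)+1 by rfl, Finset.range_add_one, Finset.image_insert,
       show 4*s+2 = (4*s+1)+1 by rfl, Finset.range_add_one, Finset.image_insert,
       show 4*s+1 = (4*s)+1 by rfl, Finset.range_add_one, Finset.image_insert,
       ih (by omega), fOdd0 hsm, fOdd1 hsm, fOdd2 hsm, fOdd3 hsm]
    ext p
    simp only [Finset.mem_insert, Finset.mem_union, mem_rowSeg, mem_colSeg, Prod.ext_iff]
    omega

lemma disj_row_col (u v : ℕ) : Disjoint (rowSeg 1 2 u) (colSeg 1 2 v) := by
  rw [Finset.disjoint_left]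
  intro p hp hq
  rw [mem_rowSeg] at hp
  rw [mem_colSeg] at hq
  omega

lemma odd_legal (m : ℕ) : ∀ t, t ≤ 4*m →
    Even ((((Finset.range t).image (fOdd m)).filter fun p => attacks p (fOdd m t)).card) := by
  intro t ht
  rcases eq_or_lt_of_le ht with h4 | h4
  · subst h4
    rw [fOddLast, image_block m m le_rfl, Finset.filter_union,
      Finset.card_union_of_disjoint (Finset.disjoint_filter_filter (disj_row_col _ _)),
      rowSeg_count_same 1 2 (2*m+1) 1 (by omega),
      colSeg_count_same 1 2 (2*m+1) 1 (by omega)]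
    rw [Nat.even_iff]; omega
  · obtain ⟨s, hsm, hcase⟩ : ∃ s, s < m ∧ (t = 4*s ∨ t = 4*s+1 ∨ t = 4*s+2 ∨ t = 4*s+3) :=
      ⟨t/4, by omega, by omega⟩
    rcases hcase with rfl | rfl | rfl | rfl
    · rw [fOdd0 hsm, image_block m s (le_of_lt hsm), Finset.filter_union,
        Finset.card_union_of_disjoint (Finset.disjoint_filter_filter (disj_row_col _ _)),
        rowSeg_count_same 1 2 (2*s+1) (2*s+2) (by omega),
        colSeg_count 1 2 (2*s+1) 1 (2*s+2) (by omega) (by omega) (by omega)]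
      rw [Nat.even_iff]; split_ifs <;> omega
    · rw [fOdd1 hsm, Finset.range_add_one, Finset.image_insert, fOdd0 hsm,
        image_block m s (le_of_lt hsm),
        card_filter_insert_neg (by intro h; simp [attacks, Prod.ext_iff] at h; omega),
        Finset.filter_union,
        Finset.card_union_of_disjoint (Finset.disjoint_filter_filter (disj_row_col _ _)),
        rowSeg_count 1 2 (2*s+1) (2*s+3) 1 (by omega) (by omega) (by omega),
        colSeg_count_same 1 2 (2*s+1) (2*s+3) (by omega)]
      rw [Nat.even_iff]; split_ifs <;> omega
    · rw [fOdd2 hsm, show 4*s+2 = (4*s+1)+1 by rfl, Finset.range_add_one, Finset.image_insert,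
        fOdd1 hsm, Finset.range_add_one, Finset.image_insert, fOdd0 hsm,
        image_block m s (le_of_lt hsm),
        card_filter_insert_pos (by simp [attacks, Prod.ext_iff] <;> omega)
          (by simp [Finset.mem_insert, Finset.mem_union, mem_rowSeg, mem_colSeg, Prod.ext_iff] <;> omega),
        card_filter_insert_pos (by simp [attacks, Prod.ext_iff] <;> omega)
          (by simp [Finset.mem_union, mem_rowSeg, mem_colSeg, Prod.ext_iff] <;> omega),
        Finset.filter_union,
        Finset.card_union_of_disjoint (Finset.disjoint_filter_filter (disj_row_col _ _)),
        rowSeg_count_same 1 2 (2*s+1) (2*s+3) (by omega),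
        colSeg_count 1 2 (2*s+1) 1 (2*s+3) (by omega) (by omega) (by omega)]
      rw [Nat.even_iff]; split_ifs <;> omega
    · rw [fOdd3 hsm, show 4*s+3 = (4*s+2)+1 by rfl, Finset.range_add_one, Finset.image_insert,
        fOdd2 hsm, show 4*s+2 = (4*s+1)+1 by rfl, Finset.range_add_one, Finset.image_insert,
        fOdd1 hsm, Finset.range_add_one, Finset.image_insert, fOdd0 hsm,
        image_block m s (le_of_lt hsm),
        card_filter_insert_neg (by intro h; simp [attacks, Prod.ext_iff] at h; omega),
        card_filter_insert_pos (by simp [attacks, Prod.ext_iff] <;> omega)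
          (by simp [Finset.mem_insert, Finset.mem_union, mem_rowSeg, mem_colSeg, Prod.ext_iff] <;> omega),
        card_filter_insert_pos (by simp [attacks, Prod.ext_iff] <;> omega)
          (by simp [Finset.mem_union, mem_rowSeg, mem_colSeg, Prod.ext_iff] <;> omega),
        Finset.filter_union,
        Finset.card_union_of_disjoint (Finset.disjoint_filter_filter (disj_row_col _ _)),
        rowSeg_count 1 2 (2*s+1) (2*s+2) 1 (by omega) (by omega) (by omega),
        colSeg_count_same 1 2 (2*s+1) (2*s+2) (by omega)]
      rw [Nat.even_iff]; split_ifs <;> omega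

lemma odd_locked (m : ℕ) :
    Locked (2*m+1) (insert (1,1) (rowSeg 1 2 (2*m+1) ∪ colSeg 1 2 (2*m+1))) := by
  intro p hp hnp
  obtain ⟨i, j⟩ := p
  simp only [board, Finset.mem_product, Finset.mem_Icc] at hp
  simp only [Finset.mem_insert, Finset.mem_union, mem_rowSeg, mem_colSeg, Prod.ext_iff] at hnp
  obtain ⟨ha, hb, hc⟩ : ¬(i = 1 ∧ j = 1) ∧ ¬(i = 1 ∧ 2 ≤ j ∧ j ≤ 2*m+1)
      ∧ ¬(j = 1 ∧ 2 ≤ i ∧ i ≤ 2*m+1) := by tauto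
  have hi2 : 2 ≤ i := by omega
  have hj2 : 2 ≤ j := by omega
  by_cases hd : attacks (1,1) (i,j)
  · have hij : i = j := by
      have h2 := hd.2
      simp only [Prod.ext_iff] at h2
      simp at h2
      omega
    rw [card_filter_insert_pos (P := fun s => attacks s (i,j)) (a := ((1:ℕ),(1:ℕ))) hd
        (by simp [Finset.mem_union, mem_rowSeg, mem_colSeg] <;> omega),
      Finset.filter_union,
      Finset.card_union_of_disjoint (Finset.disjoint_filter_filter (disj_row_col _ _)),
      rowSeg_count 1 2 (2*m+1) i j (by omega) (by omega) (by omega),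
      colSeg_count 1 2 (2*m+1) i j (by omega) (by omega) (by omega)]
    rw [Nat.odd_iff]; first | (split_ifs <;> omega) | omega
  · have hij : i ≠ j := by
      intro hceq
      exact hd ⟨by simp [Prod.ext_iff] <;> omega,
        Or.inr (Or.inr (Or.inr (by simp <;> omega)))⟩
    rw [card_filter_insert_neg (P := fun s => attacks s (i,j)) (a := ((1:ℕ),(1:ℕ))) hd,
      Finset.filter_union,
      Finset.card_union_of_disjoint (Finset.disjoint_filter_filter (disj_row_col _ _)),
      rowSeg_count 1 2 (2*m+1) i j (by omega) (by omega) (by omega),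
      colSeg_count 1 2 (2*m+1) i j (by omega) (by omega) (by omega)]
    rw [Nat.odd_iff]; first | (split_ifs <;> omega) | omega

lemma odd_case (m : ℕ) : ∃ (k : ℕ) (q : Fin k → ℕ × ℕ), k ≤ 2 * (2*m+1) - 1 ∧
    IsLegalSeq (2*m+1) q ∧ Locked (2*m+1) (Finset.univ.image q) := by
  refine ⟨4*m+1, fun t => fOdd m t.val, by omega, ⟨?_, ?_, ?_⟩, ?_⟩
  · intro a b h
    exact Fin.ext (fOdd_inj m a.val b.val (by omega) (by omega) h)
  · intro i
    exact fOdd_mem m i.val (by omega)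
  · intro i
    rw [legal_count (fOdd m) (fun s t hs ht h => fOdd_inj m s t (by omega) (by omega) h) i]
    exact odd_legal m i.val (by omega)
  · rw [univ_image_eq, Finset.range_add_one, Finset.image_insert, fOddLast,
      image_block m m le_rfl]
    exact odd_locked m

/-! ## even case -/

def fEven (m t : ℕ) : ℕ × ℕ :=
  if t = 4*(m-1) then (1, 2*m)
  else if t % 4 = 0 then (2*(t/4)+2, 1)
  else if t % 4 = 1 then (2*m, 2*m-2*(t/4)-2)
  else if t % 4 = 2 then (2*(t/4)+3, 1)
  else (2*m, 2*m-2*(t/4)-1)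

lemma fE0 {m s : ℕ} (h : s < m-1) : fEven m (4*s) = (2*s+2, 1) := by
  have h1 : 4*s ≠ 4*(m-1) := by omega
  have h2 : (4*s) % 4 = 0 := by omega
  have h3 : (4*s) / 4 = s := by omega
  simp [fEven, h1, h2, h3]

lemma fE1 {m s : ℕ} (h : s < m-1) : fEven m (4*s+1) = (2*m, 2*m-2*s-2) := by
  have h1 : 4*s+1 ≠ 4*(m-1) := by omega
  have h2 : (4*s+1) % 4 = 1 := by omega
  have h3 : (4*s+1) / 4 = s := by omega
  simp [fEven, h1, h2, h3]

lemma fE2 {m s : ℕ} (h : s < m-1) : fEven m (4*s+2) = (2*s+3, 1) := by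
  have h1 : 4*s+2 ≠ 4*(m-1) := by omega
  have h2 : (4*s+2) % 4 = 2 := by omega
  have h3 : (4*s+2) / 4 = s := by omega
  simp [fEven, h1, h2, h3]

lemma fE3 {m s : ℕ} (h : s < m-1) : fEven m (4*s+3) = (2*m, 2*m-2*s-1) := by
  have h1 : 4*s+3 ≠ 4*(m-1) := by omega
  have h2 : (4*s+3) % 4 = 3 := by omega
  have h3 : (4*s+3) / 4 = s := by omega
  simp [fEven, h1, h2, h3]

lemma fELast (m : ℕ) : fEven m (4*(m-1)) = (1, 2*m) := by simp [fEven]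

lemma fEven_inj (m : ℕ) (hm : 2 ≤ m) :
    ∀ s t, s ≤ 4*(m-1) → t ≤ 4*(m-1) → fEven m s = fEven m t → s = t := by
  intro s t hs ht h
  unfold fEven at h
  split_ifs at h <;> injection h with h1 h2 <;> omega

lemma fEven_mem (m : ℕ) (hm : 2 ≤ m) : ∀ t, t ≤ 4*(m-1) → fEven m t ∈ board (2*m) := by
  intro t ht
  unfold fEven board
  split_ifs <;> simp [Finset.mem_product, Finset.mem_Icc] <;> omega

lemma disj_col_row {u l v w : ℕ} (h : u < w) : Disjoint (colSeg 1 2 u) (rowSeg w l v) := by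
  rw [Finset.disjoint_left]
  intro p hp hq
  rw [mem_colSeg] at hp
  rw [mem_rowSeg] at hq
  omega

lemma image_blockE (m : ℕ) (hm : 2 ≤ m) : ∀ s, s ≤ m-1 →
    (Finset.range (4*s)).image (fEven m)
      = colSeg 1 2 (2*s+1) ∪ rowSeg (2*m) (2*m-2*s) (2*m-1) := by
  intro s
  induction s with
  | zero =>
    intro _
    rw [show 4*0 = 0 by rfl, Finset.range_zero, Finset.image_empty]
    ext p
    simp only [Finset.notMem_empty, Finset.mem_union, mem_rowSeg, mem_colSeg, false_iff]
    omega
  | succ s ih =>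
    intro hs
    have hsm : s < m-1 := by omega
    rw [show 4*(s+1) = (4*s+3)+1 by ring, Finset.range_add_one, Finset.image_insert,
       show 4*s+3 = (4*s+2)+1 by rfl, Finset.range_add_one, Finset.image_insert,
       show 4*s+2 = (4*s+1)+1 by rfl, Finset.range_add_one, Finset.image_insert,
       show 4*s+1 = (4*s)+1 by rfl, Finset.range_add_one, Finset.image_insert,
       ih (by omega), fE0 hsm, fE1 hsm, fE2 hsm, fE3 hsm]
    ext p
    simp only [Finset.mem_insert, Finset.mem_union, mem_rowSeg, mem_colSeg, Prod.ext_iff]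
    omega

lemma even_legal (m : ℕ) (hm : 2 ≤ m) : ∀ t, t ≤ 4*(m-1) →
    Even ((((Finset.range t).image (fEven m)).filter fun p => attacks p (fEven m t)).card) := by
  intro t ht
  rcases eq_or_lt_of_le ht with h4 | h4
  · subst h4
    rw [fELast, image_blockE m hm (m-1) le_rfl, Finset.filter_union,
      Finset.card_union_of_disjoint (Finset.disjoint_filter_filter (disj_col_row (by omega))),
      colSeg_count 1 2 (2*(m-1)+1) 1 (2*m) (by omega) (by omega) (by omega),
      rowSeg_count (2*m) (2*m-2*(m-1)) (2*m-1) 1 (2*m) (by omega) (by omega) (by omega)]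
    rw [Nat.even_iff]; split_ifs <;> omega
  · obtain ⟨s, hsm, hcase⟩ : ∃ s, s < m-1 ∧ (t = 4*s ∨ t = 4*s+1 ∨ t = 4*s+2 ∨ t = 4*s+3) :=
      ⟨t/4, by omega, by omega⟩
    rcases hcase with rfl | rfl | rfl | rfl
    · rw [fE0 hsm, image_blockE m hm s (by omega), Finset.filter_union,
        Finset.card_union_of_disjoint (Finset.disjoint_filter_filter (disj_col_row (by omega))),
        colSeg_count_same 1 2 (2*s+1) (2*s+2) (by omega),
        rowSeg_count (2*m) (2*m-2*s) (2*m-1) (2*s+2) 1 (by omega) (by omega) (by omega)]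
      rw [Nat.even_iff]; split_ifs <;> omega
    · rw [fE1 hsm, Finset.range_add_one, Finset.image_insert, fE0 hsm,
        image_blockE m hm s (by omega),
        card_filter_insert_neg (by intro h; simp [attacks, Prod.ext_iff] at h; omega),
        Finset.filter_union,
        Finset.card_union_of_disjoint (Finset.disjoint_filter_filter (disj_col_row (by omega))),
        colSeg_count 1 2 (2*s+1) (2*m) (2*m-2*s-2) (by omega) (by omega) (by omega),
        rowSeg_count_same (2*m) (2*m-2*s) (2*m-1) (2*m-2*s-2) (by omega)]
      rw [Nat.even_iff]; split_ifs <;> omega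
    · rw [fE2 hsm, show 4*s+2 = (4*s+1)+1 by rfl, Finset.range_add_one, Finset.image_insert,
        fE1 hsm, Finset.range_add_one, Finset.image_insert, fE0 hsm,
        image_blockE m hm s (by omega),
        card_filter_insert_pos (by simp [attacks, Prod.ext_iff] <;> omega)
          (by simp [Finset.mem_insert, Finset.mem_union, mem_rowSeg, mem_colSeg, Prod.ext_iff] <;> omega),
        card_filter_insert_pos (by simp [attacks, Prod.ext_iff] <;> omega)
          (by simp [Finset.mem_union, mem_rowSeg, mem_colSeg, Prod.ext_iff] <;> omega),
        Finset.filter_union,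
        Finset.card_union_of_disjoint (Finset.disjoint_filter_filter (disj_col_row (by omega))),
        colSeg_count_same 1 2 (2*s+1) (2*s+3) (by omega),
        rowSeg_count (2*m) (2*m-2*s) (2*m-1) (2*s+3) 1 (by omega) (by omega) (by omega)]
      rw [Nat.even_iff]; split_ifs <;> omega
    · rw [fE3 hsm, show 4*s+3 = (4*s+2)+1 by rfl, Finset.range_add_one, Finset.image_insert,
        fE2 hsm, show 4*s+2 = (4*s+1)+1 by rfl, Finset.range_add_one, Finset.image_insert,
        fE1 hsm, Finset.range_add_one, Finset.image_insert, fE0 hsm,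
        image_blockE m hm s (by omega),
        card_filter_insert_neg (by intro h; simp [attacks, Prod.ext_iff] at h; omega),
        card_filter_insert_pos (by simp [attacks, Prod.ext_iff] <;> omega)
          (by simp [Finset.mem_insert, Finset.mem_union, mem_rowSeg, mem_colSeg, Prod.ext_iff] <;> omega),
        card_filter_insert_pos (by simp [attacks, Prod.ext_iff] <;> omega)
          (by simp [Finset.mem_union, mem_rowSeg, mem_colSeg, Prod.ext_iff] <;> omega),
        Finset.filter_union,
        Finset.card_union_of_disjoint (Finset.disjoint_filter_filter (disj_col_row (by omega))),
        colSeg_count 1 2 (2*s+1) (2*m) (2*m-2*s-1) (by omega) (by omega) (by omega),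
        rowSeg_count_same (2*m) (2*m-2*s) (2*m-1) (2*m-2*s-1) (by omega)]
      rw [Nat.even_iff]; split_ifs <;> omega

lemma even_locked (m : ℕ) (hm : 2 ≤ m) :
    Locked (2*m) (insert (1,2*m) (colSeg 1 2 (2*m-1) ∪ rowSeg (2*m) 2 (2*m-1))) := by
  intro p hp hnp
  obtain ⟨i, j⟩ := p
  simp only [board, Finset.mem_product, Finset.mem_Icc] at hp
  simp only [Finset.mem_insert, Finset.mem_union, mem_rowSeg, mem_colSeg, Prod.ext_iff] at hnp
  obtain ⟨ha, hb, hc⟩ : ¬(i = 1 ∧ j = 2*m) ∧ ¬(j = 1 ∧ 2 ≤ i ∧ i ≤ 2*m-1)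
      ∧ ¬(i = 2*m ∧ 2 ≤ j ∧ j ≤ 2*m-1) := by tauto
  have hne : ((1:ℕ), 2*m) ∉ colSeg 1 2 (2*m-1) ∪ rowSeg (2*m) 2 (2*m-1) := by
    simp [Finset.mem_union, mem_rowSeg, mem_colSeg] <;> omega
  by_cases hj1 : j = 1
  · subst hj1
    have hi : i = 1 ∨ i = 2*m := by omega
    rcases hi with rfl | rfl
    · rw [card_filter_insert_pos (P := fun s => attacks s (1,1)) (a := ((1:ℕ), 2*m))
          (by exact ⟨by simp [Prod.ext_iff] <;> omega, Or.inl rfl⟩) hne,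
        Finset.filter_union,
        Finset.card_union_of_disjoint (Finset.disjoint_filter_filter (disj_col_row (by omega))),
        colSeg_count_same 1 2 (2*m-1) 1 (by omega),
        rowSeg_count (2*m) 2 (2*m-1) 1 1 (by omega) (by omega) (by omega)]
      rw [Nat.odd_iff]; first | (split_ifs <;> omega) | omega
    · rw [card_filter_insert_pos (P := fun s => attacks s (2*m,1)) (a := ((1:ℕ), 2*m))
          (by exact ⟨by simp [Prod.ext_iff] <;> omega,
            Or.inr (Or.inr (Or.inl (by simp <;> omega)))⟩) hne,
        Finset.filter_union,
        Finset.card_union_of_disjoint (Finset.disjoint_filter_filter (disj_col_row (by omega))),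
        colSeg_count_same 1 2 (2*m-1) (2*m) (by omega),
        rowSeg_count_same (2*m) 2 (2*m-1) 1 (by omega)]
      rw [Nat.odd_iff]; first | (split_ifs <;> omega) | omega
  · by_cases hin : i = 2*m
    · subst hin
      have hjn : j = 2*m := by omega
      subst hjn
      rw [card_filter_insert_pos (P := fun s => attacks s (2*m,2*m)) (a := ((1:ℕ), 2*m))
          (by exact ⟨by simp [Prod.ext_iff] <;> omega,
            Or.inr (Or.inl (by simp <;> omega))⟩) hne,
        Finset.filter_union,
        Finset.card_union_of_disjoint (Finset.disjoint_filter_filter (disj_col_row (by omega))),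
        colSeg_count 1 2 (2*m-1) (2*m) (2*m) (by omega) (by omega) (by omega),
        rowSeg_count_same (2*m) 2 (2*m-1) (2*m) (by omega)]
      rw [Nat.odd_iff]; first | (split_ifs <;> omega) | omega
    · -- general region: i ≤ 2m-1, j ≥ 2
      have hil : i ≤ 2*m-1 := by omega
      have hj2 : 2 ≤ j := by omega
      by_cases hd : attacks (1, 2*m) (i,j)
      · have hdc : i = 1 ∨ j = 2*m ∨ i + j = 2*m + 1 := by
          have h2 := hd.2
          simp only [Prod.ext_iff] at h2
          try simp at h2
          omega
        rw [card_filter_insert_pos (P := fun s => attacks s (i,j)) (a := ((1:ℕ), 2*m)) hd hne,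
          Finset.filter_union,
          Finset.card_union_of_disjoint (Finset.disjoint_filter_filter (disj_col_row (by omega))),
          colSeg_count 1 2 (2*m-1) i j (by omega) (by omega) (by omega),
          rowSeg_count (2*m) 2 (2*m-1) i j (by omega) (by omega) (by omega)]
        rw [Nat.odd_iff]; first | (split_ifs <;> omega) | omega
      · have hdc : ¬(i = 1 ∨ j = 2*m ∨ i + j = 2*m + 1) := by
          intro hcon
          apply hd
          refine ⟨by simp [Prod.ext_iff] <;> omega, ?_⟩
          simp only [Prod.ext_iff]
          try simp
          omega
        rw [card_filter_insert_neg (P := fun s => attacks s (i,j)) (a := ((1:ℕ), 2*m)) hd,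
          Finset.filter_union,
          Finset.card_union_of_disjoint (Finset.disjoint_filter_filter (disj_col_row (by omega))),
          colSeg_count 1 2 (2*m-1) i j (by omega) (by omega) (by omega),
          rowSeg_count (2*m) 2 (2*m-1) i j (by omega) (by omega) (by omega)]
        rw [Nat.odd_iff]; first | (split_ifs <;> omega) | omega

lemma even_case (m : ℕ) (hm : 2 ≤ m) : ∃ (k : ℕ) (q : Fin k → ℕ × ℕ), k ≤ 2 * (2*m) - 3 ∧
    IsLegalSeq (2*m) q ∧ Locked (2*m) (Finset.univ.image q) := by
  refine ⟨4*(m-1)+1, fun t => fEven m t.val, by omega, ⟨?_, ?_, ?_⟩, ?_⟩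
  · intro a b h
    exact Fin.ext (fEven_inj m hm a.val b.val (by omega) (by omega) h)
  · intro i
    exact fEven_mem m hm i.val (by omega)
  · intro i
    rw [legal_count (fEven m) (fun s t hs ht h => fEven_inj m hm s t (by omega) (by omega) h) i]
    exact even_legal m hm i.val (by omega)
  · rw [univ_image_eq, Finset.range_add_one, Finset.image_insert, fELast,
      image_blockE m hm (m-1) le_rfl]
    rw [show 2*m-2*(m-1) = 2 by omega, show 2*(m-1)+1 = 2*m-1 by omega]
    exact even_locked m hm

/-- For odd positive `n`, at most `2n - 1` queens are needed to lock the board; for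
even `n > 2`, at most `2n - 3` queens are needed to lock the board. -/
theorem locking_upper_bound (n : ℕ) :
    (0 < n → Odd n → ∃ (k : ℕ) (q : Fin k → ℕ × ℕ), k ≤ 2 * n - 1 ∧
      IsLegalSeq n q ∧ Locked n (Finset.univ.image q)) ∧
    (2 < n → Even n → ∃ (k : ℕ) (q : Fin k → ℕ × ℕ), k ≤ 2 * n - 3 ∧
      IsLegalSeq n q ∧ Locked n (Finset.univ.image q)) := by
  constructor
  · intro _ hodd
    obtain ⟨m, hm⟩ := hodd
    subst hm
    exact odd_case m
  · intro h2 heven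
    obtain ⟨m, hm⟩ := heven
    have h : n = 2*m := by omega
    subst h
    exact even_case m (by omega)
end

section
/- For every odd positive integer n and every square q of the n×n chessboard, the number of squares p ≠ q that attack q is even. (Equivalently, on a fully covered odd-length chessboard every square is attacked by an even number of queens.) -/
/-- For odd positive `n`, every square of the `n × n` chessboard is attacked by an even
number of other squares. -/
theorem odd_board_attack_parity (n : ℕ) (hpos : 0 < n) (hodd : Odd n)
    (q : ℕ × ℕ) (hq : q ∈ board n) :
    Even (((board n).filter fun p => attacks p q).card) := by
  classical
  obtain ⟨a, b⟩ := q
  simp only [board, Finset.mem_product, Finset.mem_Icc] at hq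
  obtain ⟨⟨ha1, ha2⟩, hb1, hb2⟩ := hq
  set F1 := (board n).filter (fun p => p.1 = a ∧ p.2 ≠ b) with hF1
  set F2 := (board n).filter (fun p => p.2 = b ∧ p.1 ≠ a) with hF2
  set F3 := (board n).filter (fun p => p.1 ≠ a ∧ p.1 + b = a + p.2) with hF3
  set F4 := (board n).filter (fun p => p.1 ≠ a ∧ p.1 + p.2 = a + b) with hF4
  have hsplit : ((board n).filter fun p => attacks p (a, b)) = ((F1 ∪ F2) ∪ F3) ∪ F4 := by
    ext ⟨x, y⟩
    rw [Finset.mem_filter]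
    simp only [hF1, hF2, hF3, hF4, Finset.mem_union, Finset.mem_filter, attacks, ne_eq,
      Prod.mk.injEq, not_and, board, Finset.mem_product, Finset.mem_Icc]
    omega
  -- row
  have h1 : F1 = ((Finset.Icc 1 n).erase b).image (fun j => (a, j)) := by
    ext ⟨x, y⟩
    simp only [hF1, board, Finset.mem_filter, Finset.mem_product, Finset.mem_Icc,
      Finset.mem_image, Finset.mem_erase, ne_eq, Prod.mk.injEq]
    constructor
    · rintro ⟨⟨hx, hy⟩, rfl, hne⟩
      exact ⟨y, ⟨hne, hy⟩, rfl, rfl⟩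
    · rintro ⟨j, ⟨hj, hj2⟩, rfl, rfl⟩
      exact ⟨⟨⟨ha1, ha2⟩, hj2⟩, rfl, hj⟩
  have h1c : F1.card = n - 1 := by
    rw [h1, Finset.card_image_of_injective _ (fun u v h => (Prod.ext_iff.mp h).2),
      Finset.card_erase_of_mem (by simp [Finset.mem_Icc]; omega), Nat.card_Icc]; omega
  -- column
  have h2 : F2 = ((Finset.Icc 1 n).erase a).image (fun i => (i, b)) := by
    ext ⟨x, y⟩
    simp only [hF2, board, Finset.mem_filter, Finset.mem_product, Finset.mem_Icc,
      Finset.mem_image, Finset.mem_erase, ne_eq, Prod.mk.injEq]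
    constructor
    · rintro ⟨⟨hx, hy⟩, rfl, hne⟩
      exact ⟨x, ⟨hne, hx⟩, rfl, rfl⟩
    · rintro ⟨i, ⟨hi, hi2⟩, rfl, rfl⟩
      exact ⟨⟨hi2, hb1, hb2⟩, rfl, hi⟩
  have h2c : F2.card = n - 1 := by
    rw [h2, Finset.card_image_of_injective _ (fun u v h => (Prod.ext_iff.mp h).1),
      Finset.card_erase_of_mem (by simp [Finset.mem_Icc]; omega), Nat.card_Icc]; omega
  -- diagonal
  have h3 : F3 = ((Finset.Icc (max 1 (a + 1 - b)) (min n (a + n - b))).erase a).image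
      (fun i => (i, i + b - a)) := by
    ext ⟨x, y⟩
    simp only [hF3, board, Finset.mem_filter, Finset.mem_product, Finset.mem_Icc,
      Finset.mem_image, Finset.mem_erase, ne_eq, Prod.mk.injEq]
    constructor
    · rintro ⟨⟨hx, hy⟩, hne, heq⟩
      exact ⟨x, ⟨hne, by omega, by omega⟩, rfl, by omega⟩
    · rintro ⟨i, ⟨hne, hi1, hi2⟩, rfl, rfl⟩
      refine ⟨⟨?_, ?_⟩, hne, ?_⟩ <;> omega
  have h3c : F3.card = min n (a + n - b) + 1 - max 1 (a + 1 - b) - 1 := by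
    rw [h3, Finset.card_image_of_injective _ (fun u v h => (Prod.ext_iff.mp h).1),
      Finset.card_erase_of_mem (by simp [Finset.mem_Icc]; omega), Nat.card_Icc]
  -- antidiagonal
  have h4 : F4 = ((Finset.Icc (max 1 (a + b - n)) (min n (a + b - 1))).erase a).image
      (fun i => (i, a + b - i)) := by
    ext ⟨x, y⟩
    simp only [hF4, board, Finset.mem_filter, Finset.mem_product, Finset.mem_Icc,
      Finset.mem_image, Finset.mem_erase, ne_eq, Prod.mk.injEq]
    constructor
    · rintro ⟨⟨hx, hy⟩, hne, heq⟩
      exact ⟨x, ⟨hne, by omega, by omega⟩, rfl, by omega⟩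
    · rintro ⟨i, ⟨hne, hi1, hi2⟩, rfl, rfl⟩
      refine ⟨⟨?_, ?_⟩, hne, ?_⟩ <;> omega
  have h4c : F4.card = min n (a + b - 1) + 1 - max 1 (a + b - n) - 1 := by
    rw [h4, Finset.card_image_of_injective _ (fun u v h => (Prod.ext_iff.mp h).1),
      Finset.card_erase_of_mem (by simp [Finset.mem_Icc]; omega), Nat.card_Icc]
  -- disjointness
  have hd1 : Disjoint F1 F2 := by
    rw [Finset.disjoint_left]
    rintro ⟨x, y⟩ hx hy
    simp only [hF1, hF2, Finset.mem_filter] at hx hy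
    omega
  have hd2 : Disjoint (F1 ∪ F2) F3 := by
    rw [Finset.disjoint_left]
    rintro ⟨x, y⟩ hx hy
    simp only [hF1, hF2, hF3, Finset.mem_union, Finset.mem_filter] at hx hy
    omega
  have hd3 : Disjoint ((F1 ∪ F2) ∪ F3) F4 := by
    rw [Finset.disjoint_left]
    rintro ⟨x, y⟩ hx hy
    simp only [hF1, hF2, hF3, hF4, Finset.mem_union, Finset.mem_filter] at hx hy
    omega
  rw [hsplit, Finset.card_union_of_disjoint hd3, Finset.card_union_of_disjoint hd2,
    Finset.card_union_of_disjoint hd1, h1c, h2c, h3c, h4c, Nat.even_iff]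
  obtain ⟨m, hm⟩ := hodd
  omega
end

section
/- Let n ≥ 3 be an integer and let Q be the set of squares of the n×n chessboard lying in the first two rows or the first two columns, i.e., Q = {(i,j) : i ≤ 2 or j ≤ 2}. Then every square (i,j) with i ≥ 3 and j ≥ 3 is attacked by an even number of squares of Q. -/
lemma swap_filter (n i j : ℕ) :
    (((board n).filter fun p => p.1 ≤ 2 ∨ p.2 ≤ 2).filter fun p => attacks p (j, i)) =
      Finset.image Prod.swap
        (((board n).filter fun p => p.1 ≤ 2 ∨ p.2 ≤ 2).filter fun p => attacks p (i, j)) := by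
  ext ⟨a, b⟩
  simp only [Finset.mem_image, Finset.mem_filter]
  simp only [Finset.mem_image, Finset.mem_filter, board, Finset.mem_product, Finset.mem_Icc,
    attacks, ne_eq, Prod.mk.injEq, not_and, Prod.exists, Prod.swap_prod_mk]
  constructor
  · rintro ⟨⟨⟨ha, hb⟩, hq⟩, hne, hrel⟩
    exact ⟨b, a, ⟨⟨⟨hb, ha⟩, hq.symm⟩, by omega, by omega⟩, rfl, rfl⟩
  · rintro ⟨x, y, ⟨⟨⟨hx, hy⟩, hq⟩, hne, hrel⟩, rfl, rfl⟩
    exact ⟨⟨⟨hy, hx⟩, hq.symm⟩, by omega, by omega⟩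

lemma aux (n i d : ℕ) (hn : 3 ≤ n) (hi : 3 ≤ i) (hjn : i + d ≤ n) :
    Even ((((board n).filter fun p => p.1 ≤ 2 ∨ p.2 ≤ 2).filter
      fun p => attacks p (i, i + d)).card) := by
  have hin : i ≤ n := by omega
  obtain ⟨s, hs⟩ : ∃ s, i + (i + d) = s + 2 := ⟨i + i + d - 2, by omega⟩
  rcases le_or_gt (s + 1) n with hc1 | hc1
  · have hS : (((board n).filter fun p => p.1 ≤ 2 ∨ p.2 ≤ 2).filter
        fun p => attacks p (i, i + d)) =
        {(i,1),(i,2),(1,i+d),(2,i+d),(1,d+1),(2,d+2),(1,s+1),(s+1,1),(2,s),(s,2)} := by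
      ext ⟨a, b⟩
      simp only [Finset.mem_filter]
      simp only [Finset.mem_filter, board, Finset.mem_product, Finset.mem_Icc, attacks,
        ne_eq, Prod.mk.injEq, not_and, Finset.mem_insert, Finset.mem_singleton]
      constructor
      · rintro ⟨⟨⟨⟨ha1, ha2⟩, hb1, hb2⟩, hq⟩, hne, h | h | h | h⟩
        · subst h
          have hb : b = 1 ∨ b = 2 := by omega
          rcases hb with rfl | rfl <;> simp
        · subst h
          have ha : a = 1 ∨ a = 2 := by omega
          rcases ha with rfl | rfl <;> simp
        · have hd : (a = 1 ∧ b = s+1) ∨ (a = 2 ∧ b = s) ∨ (a = s+1 ∧ b = 1) ∨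
              (a = s ∧ b = 2) := by omega
          rcases hd with ⟨rfl, rfl⟩ | ⟨rfl, rfl⟩ | ⟨rfl, rfl⟩ | ⟨rfl, rfl⟩ <;> simp
        · have ha : a = 1 ∨ a = 2 := by omega
          rcases ha with rfl | rfl
          · have hb : b = d + 1 := by omega
            subst hb; simp
          · have hb : b = d + 2 := by omega
            subst hb; simp
      · rintro (⟨rfl, rfl⟩ | ⟨rfl, rfl⟩ | ⟨rfl, rfl⟩ | ⟨rfl, rfl⟩ | ⟨rfl, rfl⟩ | ⟨rfl, rfl⟩ |
          ⟨rfl, rfl⟩ | ⟨rfl, rfl⟩ | ⟨rfl, rfl⟩ | ⟨rfl, rfl⟩) <;>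
          exact ⟨⟨⟨⟨by omega, by omega⟩, by omega, by omega⟩, by omega⟩, by omega, by omega⟩
    rw [hS]
    repeat rw [Finset.card_insert_of_notMem (by
      simp only [Finset.mem_insert, Finset.mem_singleton, Prod.mk.injEq]; omega)]
    simp only [Finset.card_singleton]
    decide
  · rcases le_or_gt s n with hc2 | hc2
    · have hS : (((board n).filter fun p => p.1 ≤ 2 ∨ p.2 ≤ 2).filter
          fun p => attacks p (i, i + d)) =
          {(i,1),(i,2),(1,i+d),(2,i+d),(1,d+1),(2,d+2),(2,s),(s,2)} := by
        ext ⟨a, b⟩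
        simp only [Finset.mem_filter]
        simp only [Finset.mem_filter, board, Finset.mem_product, Finset.mem_Icc, attacks,
          ne_eq, Prod.mk.injEq, not_and, Finset.mem_insert, Finset.mem_singleton]
        constructor
        · rintro ⟨⟨⟨⟨ha1, ha2⟩, hb1, hb2⟩, hq⟩, hne, h | h | h | h⟩
          · subst h
            have hb : b = 1 ∨ b = 2 := by omega
            rcases hb with rfl | rfl <;> simp
          · subst h
            have ha : a = 1 ∨ a = 2 := by omega
            rcases ha with rfl | rfl <;> simp
          · have hd : (a = 2 ∧ b = s) ∨ (a = s ∧ b = 2) := by omega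
            rcases hd with ⟨rfl, rfl⟩ | ⟨rfl, rfl⟩ <;> simp
          · have ha : a = 1 ∨ a = 2 := by omega
            rcases ha with rfl | rfl
            · have hb : b = d + 1 := by omega
              subst hb; simp
            · have hb : b = d + 2 := by omega
              subst hb; simp
        · rintro (⟨rfl, rfl⟩ | ⟨rfl, rfl⟩ | ⟨rfl, rfl⟩ | ⟨rfl, rfl⟩ | ⟨rfl, rfl⟩ | ⟨rfl, rfl⟩ |
            ⟨rfl, rfl⟩ | ⟨rfl, rfl⟩) <;>
            exact ⟨⟨⟨⟨by omega, by omega⟩, by omega, by omega⟩, by omega⟩, by omega, by omega⟩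
      rw [hS]
      repeat rw [Finset.card_insert_of_notMem (by
        simp only [Finset.mem_insert, Finset.mem_singleton, Prod.mk.injEq]; omega)]
      simp only [Finset.card_singleton]
      decide
    · have hS : (((board n).filter fun p => p.1 ≤ 2 ∨ p.2 ≤ 2).filter
          fun p => attacks p (i, i + d)) =
          {(i,1),(i,2),(1,i+d),(2,i+d),(1,d+1),(2,d+2)} := by
        ext ⟨a, b⟩
        simp only [Finset.mem_filter]
        simp only [Finset.mem_filter, board, Finset.mem_product, Finset.mem_Icc, attacks,
          ne_eq, Prod.mk.injEq, not_and, Finset.mem_insert, Finset.mem_singleton]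
        constructor
        · rintro ⟨⟨⟨⟨ha1, ha2⟩, hb1, hb2⟩, hq⟩, hne, h | h | h | h⟩
          · subst h
            have hb : b = 1 ∨ b = 2 := by omega
            rcases hb with rfl | rfl <;> simp
          · subst h
            have ha : a = 1 ∨ a = 2 := by omega
            rcases ha with rfl | rfl <;> simp
          · exact absurd h (by omega)
          · have ha : a = 1 ∨ a = 2 := by omega
            rcases ha with rfl | rfl
            · have hb : b = d + 1 := by omega
              subst hb; simp
            · have hb : b = d + 2 := by omega
              subst hb; simp
        · rintro (⟨rfl, rfl⟩ | ⟨rfl, rfl⟩ | ⟨rfl, rfl⟩ | ⟨rfl, rfl⟩ | ⟨rfl, rfl⟩ | ⟨rfl, rfl⟩) <;>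
            exact ⟨⟨⟨⟨by omega, by omega⟩, by omega, by omega⟩, by omega⟩, by omega, by omega⟩
      rw [hS]
      repeat rw [Finset.card_insert_of_notMem (by
        simp only [Finset.mem_insert, Finset.mem_singleton, Prod.mk.injEq]; omega)]
      simp only [Finset.card_singleton]
      decide

/-- For `n ≥ 3`, every square `(i,j)` with `i ≥ 3` and `j ≥ 3` is attacked by an even
number of squares lying in the first two rows or first two columns. -/
theorem first_two_rows_cols_even_attack (n : ℕ) (hn : 3 ≤ n) (i j : ℕ)
    (hij : (i, j) ∈ board n) (hi : 3 ≤ i) (hj : 3 ≤ j) :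
    Even ((((board n).filter fun p => p.1 ≤ 2 ∨ p.2 ≤ 2).filter
      fun p => attacks p (i, j)).card) := by
  simp only [board, Finset.mem_product, Finset.mem_Icc] at hij
  obtain ⟨⟨hi1, hin⟩, ⟨hj1, hjn⟩⟩ := hij
  rcases le_total i j with h | h
  · obtain ⟨d, rfl⟩ := Nat.exists_eq_add_of_le h
    exact aux n i d hn hi hjn
  · obtain ⟨d, rfl⟩ := Nat.exists_eq_add_of_le h
    rw [swap_filter, Finset.card_image_of_injective _ Prod.swap_injective]
    exact aux n j d hn hj hin
end
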